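/- arXiv:2204.12958 — 4 statements merged into one kernel-verified Lean document; each statement's English description precedes it below -/
import Mathlib

section
/- Let ω : (0, 2] → [0, ∞) be a nondecreasing function with the doubling-type property ω(t) ≤ C₀ ω(s) whenever 0 < t ≤ s ≤ 4t (for some constant C₀ ≥ 1). Suppose there are ε > 0 and δ ∈ (0,1) and a constant C* > 0 with C*·ε < 1 such that ω(t) ≤ ε (ln(1/t))^{-1} for all t ∈ (0, δ). Then limsup_{r → 0+} r ∫_r^2 (ω(t)/t²) exp( C* ∫_t^2 (ω(s)/s) ds ) dt = 0. -/
open Real Filter MeasureTheory intervalIntegral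

set_option maxHeartbeats 2000000 in
theorem limsup_X_eq_zero (ω : ℝ → ℝ) (C₀ Cstar ε δ : ℝ)
    (hmeas : Measurable ω)
    (hnonneg : ∀ t ∈ Set.Ioc (0 : ℝ) 2, 0 ≤ ω t)
    (hbdd : ∃ M : ℝ, ∀ t ∈ Set.Ioc (0 : ℝ) 2, ω t ≤ M)
    (hmono : MonotoneOn ω (Set.Ioc (0 : ℝ) 2))
    (hC₀ : 1 ≤ C₀)
    (hdoubling : ∀ t s : ℝ, 0 < t → t ≤ s → s ≤ 4 * t → s ≤ 2 → ω t ≤ C₀ * ω s)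
    (hCstar : 0 < Cstar) (hε : 0 < ε) (hδ0 : 0 < δ) (hδ1 : δ < 1)
    (hεC : Cstar * ε < 1)
    (hsmall : ∀ t ∈ Set.Ioo (0 : ℝ) δ, ω t ≤ ε * (Real.log (1 / t))⁻¹) :
    Filter.limsup
      (fun r : ℝ => r * ∫ t in r..2,
        (ω t / t ^ 2) * Real.exp (Cstar * ∫ s in t..2, ω s / s))
      (nhdsWithin 0 (Set.Ioi 0)) = 0 := by
  obtain ⟨M, hM⟩ := hbdd
  have h2mem : (2 : ℝ) ∈ Set.Ioc (0 : ℝ) 2 := ⟨by norm_num, le_refl _⟩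
  have hM0 : 0 ≤ M := le_trans (hnonneg 2 h2mem) (hM 2 h2mem)
  -- integrability of s ↦ ω s / s on subintervals of (0,2]
  have hgint : ∀ a b : ℝ, 0 < a → a ≤ b → b ≤ 2 →
      IntervalIntegrable (fun s => ω s / s) volume a b := by
    intro a b ha hab hb2
    rw [intervalIntegrable_iff, Set.uIoc_of_le hab]
    refine Integrable.mono' (g := fun _ => M / a)
      (integrableOn_const measure_Ioc_lt_top.ne)
      ((hmeas.div measurable_id).aestronglyMeasurable) ?_
    refine (ae_restrict_iff' measurableSet_Ioc).2 (ae_of_all _ fun s hs => ?_)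
    have hs0 : 0 < s := lt_of_lt_of_le ha hs.1.le
    have hωs : 0 ≤ ω s := hnonneg s ⟨hs0, hs.2.trans hb2⟩
    have hωM : ω s ≤ M := hM s ⟨hs0, hs.2.trans hb2⟩
    rw [Real.norm_eq_abs, abs_of_nonneg (div_nonneg hωs hs0.le)]
    calc ω s / s ≤ M / s := by gcongr
      _ ≤ M / a := by gcongr; exact hs.1.le
  -- choice of δ₁
  set δ₁ : ℝ := min δ (Real.exp (-1)) / 2 with hδ₁def
  have hδ₁0 : 0 < δ₁ := by positivity
  have hδ₁δ : δ₁ < δ := by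
    have : min δ (Real.exp (-1)) ≤ δ := min_le_left _ _
    have h2 : 0 < min δ (Real.exp (-1)) := lt_min hδ0 (Real.exp_pos _)
    rw [hδ₁def]; linarith
  have hδ₁e : δ₁ < Real.exp (-1) := by
    have : min δ (Real.exp (-1)) ≤ Real.exp (-1) := min_le_right _ _
    have h2 : 0 < min δ (Real.exp (-1)) := lt_min hδ0 (Real.exp_pos _)
    rw [hδ₁def]; linarith
  have he1 : Real.exp (-1 : ℝ) < 1 := by
    rw [Real.exp_lt_one_iff]; norm_num
  have hδ₁1 : δ₁ < 1 := hδ₁e.trans he1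
  have hδ₁2 : δ₁ < 2 := by linarith
  have hlogδ₁ : 1 < -Real.log δ₁ := by
    have := (Real.log_lt_iff_lt_exp hδ₁0).2 hδ₁e
    linarith
  have hneglog : ∀ t : ℝ, 0 < t → t ≤ δ₁ → 1 < -Real.log t := by
    intro t ht0 htδ₁
    have : Real.log t ≤ Real.log δ₁ := Real.log_le_log ht0 htδ₁
    linarith
  -- global bound on inner integral
  have hItop : ∀ t : ℝ, 0 < t → t ≤ 2 →
      (∫ s in t..2, ω s / s) ≤ M * (Real.log 2 - Real.log t) := by
    intro t ht0 ht2
    have hint2 : IntervalIntegrable (fun s => M * s⁻¹) volume t 2 := by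
      apply ContinuousOn.intervalIntegrable
      apply ContinuousOn.mul continuousOn_const
      apply ContinuousOn.inv₀ continuousOn_id
      intro x hx
      rw [Set.uIcc_of_le ht2] at hx
      exact ne_of_gt (lt_of_lt_of_le ht0 hx.1)
    have hmono2 : (∫ s in t..2, ω s / s) ≤ ∫ s in t..2, M * s⁻¹ := by
      apply integral_mono_on ht2 (hgint t 2 ht0 ht2 le_rfl) hint2
      intro s hs
      have hs0 : 0 < s := lt_of_lt_of_le ht0 hs.1
      calc ω s / s ≤ M / s := by gcongr; exact hM s ⟨hs0, hs.2⟩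
        _ = M * s⁻¹ := by rw [div_eq_mul_inv]
    have hcomp : (∫ s in t..2, M * s⁻¹) = M * (Real.log 2 - Real.log t) := by
      rw [intervalIntegral.integral_const_mul, integral_inv, Real.log_div (by norm_num) (ne_of_gt ht0)]
      rw [Set.uIcc_of_le ht2]
      intro h
      exact absurd h.1 (not_le.2 ht0)
    linarith
  -- refined bound on inner integral for small t
  have hIsmall : ∀ t : ℝ, 0 < t → t ≤ δ₁ →
      (∫ s in t..2, ω s / s) ≤
        ε * Real.log (-Real.log t) + M * (Real.log 2 - Real.log δ₁) := by
    intro t ht0 htδ₁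
    have hsplit : (∫ s in t..δ₁, ω s / s) + (∫ s in δ₁..2, ω s / s)
        = ∫ s in t..2, ω s / s :=
      integral_add_adjacent_intervals (hgint t δ₁ ht0 htδ₁ (by linarith))
        (hgint δ₁ 2 hδ₁0 hδ₁2.le le_rfl)
    have hpart2 : (∫ s in δ₁..2, ω s / s) ≤ M * (Real.log 2 - Real.log δ₁) :=
      hItop δ₁ hδ₁0 hδ₁2.le
    -- comparison function continuous on [t, δ₁]
    have hcont : ContinuousOn (fun s : ℝ => ε * ((-Real.log s)⁻¹ * s⁻¹)) (Set.uIcc t δ₁) := by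
      rw [Set.uIcc_of_le htδ₁]
      have hpos : ∀ x ∈ Set.Icc t δ₁, 0 < x := fun x hx => lt_of_lt_of_le ht0 hx.1
      apply ContinuousOn.mul continuousOn_const
      apply ContinuousOn.mul
      · apply ContinuousOn.inv₀
        · exact (Real.continuousOn_log.mono (fun x hx => ne_of_gt (hpos x hx))).neg
        · intro x hx
          have := hneglog x (hpos x hx) hx.2
          linarith
      · exact continuousOn_inv₀.mono (fun x hx => ne_of_gt (hpos x hx))
    have hmono1 : (∫ s in t..δ₁, ω s / s) ≤
        ∫ s in t..δ₁, ε * ((-Real.log s)⁻¹ * s⁻¹) := by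
      apply integral_mono_on htδ₁ (hgint t δ₁ ht0 htδ₁ (by linarith))
        (hcont.intervalIntegrable)
      intro s hs
      have hs0 : 0 < s := lt_of_lt_of_le ht0 hs.1
      have hsδ : s < δ := lt_of_le_of_lt hs.2 hδ₁δ
      have hωs := hsmall s ⟨hs0, hsδ⟩
      rw [one_div, Real.log_inv] at hωs
      have hL : 1 < -Real.log s := hneglog s hs0 hs.2
      calc ω s / s = ω s * s⁻¹ := div_eq_mul_inv _ _
        _ ≤ (ε * (-Real.log s)⁻¹) * s⁻¹ := by
            apply mul_le_mul_of_nonneg_right hωs (inv_nonneg.2 hs0.le)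
        _ = ε * ((-Real.log s)⁻¹ * s⁻¹) := by ring
    have hftc : (∫ s in t..δ₁, ε * ((-Real.log s)⁻¹ * s⁻¹)) =
        (-ε * Real.log (-Real.log δ₁)) - (-ε * Real.log (-Real.log t)) := by
      apply integral_eq_sub_of_hasDerivAt (f := fun s : ℝ => -ε * Real.log (-Real.log s))
      · intro x hx
        rw [Set.uIcc_of_le htδ₁] at hx
        have hx0 : 0 < x := lt_of_lt_of_le ht0 hx.1
        have hLx : 1 < -Real.log x := hneglog x hx0 hx.2
        have h1 : HasDerivAt (fun s : ℝ => -Real.log s) (-x⁻¹) x :=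
          (Real.hasDerivAt_log (ne_of_gt hx0)).neg
        have h2 : HasDerivAt (fun s : ℝ => Real.log (-Real.log s))
            ((-Real.log x)⁻¹ * (-x⁻¹)) x :=
          (Real.hasDerivAt_log (by linarith)).comp x h1
        have h3 := h2.const_mul (-ε)
        exact h3.congr_deriv (by ring)
      · exact hcont.intervalIntegrable
    have hlogδ₁pos : 0 ≤ Real.log (-Real.log δ₁) := Real.log_nonneg hlogδ₁.le
    have : (∫ s in t..δ₁, ε * ((-Real.log s)⁻¹ * s⁻¹)) ≤ ε * Real.log (-Real.log t) := by
      rw [hftc]; nlinarith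
    linarith
  -- constants
  set a : ℝ := Cstar * ε with hadef
  have ha0 : 0 < a := mul_pos hCstar hε
  have ha1 : a < 1 := hεC
  set K : ℝ := Real.exp (Cstar * (M * (Real.log 2 - Real.log δ₁))) with hKdef
  have hK0 : 0 < K := Real.exp_pos _
  -- bound on the numerator h t = ω t * exp(Cstar * I t) for small t
  have hnum_small : ∀ t : ℝ, 0 < t → t ≤ δ₁ →
      ω t * Real.exp (Cstar * ∫ s in t..2, ω s / s) ≤
        ε * K * ((-Real.log t) ^ (a - 1) : ℝ) := by
    intro t ht0 htδ₁
    have hL : 1 < -Real.log t := hneglog t ht0 htδ₁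
    have hL0 : 0 < -Real.log t := by linarith
    have hexp : Real.exp (Cstar * ∫ s in t..2, ω s / s) ≤ K * (-Real.log t) ^ a := by
      have h1 : Cstar * (∫ s in t..2, ω s / s) ≤
          Cstar * (M * (Real.log 2 - Real.log δ₁)) + a * Real.log (-Real.log t) :=
        calc Cstar * (∫ s in t..2, ω s / s)
            ≤ Cstar * (ε * Real.log (-Real.log t) + M * (Real.log 2 - Real.log δ₁)) :=
              mul_le_mul_of_nonneg_left (hIsmall t ht0 htδ₁) hCstar.le
          _ = Cstar * (M * (Real.log 2 - Real.log δ₁)) + a * Real.log (-Real.log t) := by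
              rw [hadef]; ring
      calc Real.exp (Cstar * ∫ s in t..2, ω s / s)
          ≤ Real.exp (Cstar * (M * (Real.log 2 - Real.log δ₁)) + a * Real.log (-Real.log t)) :=
            Real.exp_le_exp.2 h1
        _ = K * (-Real.log t) ^ a := by
            rw [Real.exp_add, Real.rpow_def_of_pos hL0, mul_comm (Real.log _) a]
    have hωt : ω t ≤ ε * (-Real.log t)⁻¹ := by
      have := hsmall t ⟨ht0, lt_of_le_of_lt htδ₁ hδ₁δ⟩
      rwa [one_div, Real.log_inv] at this
    have hωt0 : 0 ≤ ω t := hnonneg t ⟨ht0, by linarith⟩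
    calc ω t * Real.exp (Cstar * ∫ s in t..2, ω s / s)
        ≤ (ε * (-Real.log t)⁻¹) * (K * (-Real.log t) ^ a) := by
          apply mul_le_mul hωt hexp (Real.exp_pos _).le
          positivity
      _ = ε * K * ((-Real.log t) ^ a / (-Real.log t)) := by
          rw [div_eq_mul_inv]; ring
      _ = ε * K * ((-Real.log t) ^ (a - 1) : ℝ) := by
          rw [Real.rpow_sub hL0, Real.rpow_one]
  -- global bound on the numerator
  set B : ℝ := max (ε * K) (M * K) with hBdef
  have hB0 : 0 ≤ B := le_trans (by positivity) (le_max_left _ _)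
  have hnum_bdd : ∀ t : ℝ, 0 < t → t ≤ 2 →
      ω t * Real.exp (Cstar * ∫ s in t..2, ω s / s) ≤ B := by
    intro t ht0 ht2
    rcases le_or_gt t δ₁ with htδ₁ | htδ₁
    · have h1 := hnum_small t ht0 htδ₁
      have hL : 1 < -Real.log t := hneglog t ht0 htδ₁
      have h2 : ((-Real.log t) ^ (a - 1) : ℝ) ≤ 1 :=
        Real.rpow_le_one_of_one_le_of_nonpos hL.le (by linarith)
      have : ε * K * ((-Real.log t) ^ (a - 1) : ℝ) ≤ ε * K := by
        have h3 := mul_le_mul_of_nonneg_left h2 (by positivity : (0:ℝ) ≤ ε * K)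
        simpa using h3
      exact le_trans (le_trans h1 this) (le_max_left _ _)
    · have hωt : ω t ≤ M := hM t ⟨ht0, ht2⟩
      have hωt0 : 0 ≤ ω t := hnonneg t ⟨ht0, ht2⟩
      have hI : (∫ s in t..2, ω s / s) ≤ M * (Real.log 2 - Real.log δ₁) := by
        have h1 := hItop t ht0 ht2
        have h2 : Real.log δ₁ ≤ Real.log t := Real.log_le_log hδ₁0 htδ₁.le
        nlinarith
      have hexp : Real.exp (Cstar * ∫ s in t..2, ω s / s) ≤ K := by
        apply Real.exp_le_exp.2
        exact mul_le_mul_of_nonneg_left hI hCstar.le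
      calc ω t * Real.exp (Cstar * ∫ s in t..2, ω s / s) ≤ M * K := by
            apply mul_le_mul hωt hexp (Real.exp_pos _).le hM0
        _ ≤ B := le_max_right _ _
  -- the numerator tends to 0
  have hnum_tendsto : Tendsto
      (fun t => ω t * Real.exp (Cstar * ∫ s in t..2, ω s / s))
      (nhdsWithin 0 (Set.Ioi 0)) (nhds 0) := by
    have l1 : Tendsto (fun t : ℝ => -Real.log t) (nhdsWithin 0 (Set.Ioi 0)) atTop :=
      tendsto_neg_atBot_atTop.comp Real.tendsto_log_nhdsGT_zero
    have l2 : Tendsto (fun x : ℝ => x ^ (a - 1)) atTop (nhds 0) := by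
      have := tendsto_rpow_neg_atTop (y := 1 - a) (by linarith)
      convert this using 2
      ring_nf
    have l3 : Tendsto (fun t : ℝ => ε * K * ((-Real.log t) ^ (a - 1) : ℝ))
        (nhdsWithin 0 (Set.Ioi 0)) (nhds 0) := by
      have := (l2.comp l1).const_mul (ε * K)
      simpa using this
    apply squeeze_zero' _ _ l3
    · filter_upwards [Ioo_mem_nhdsGT hδ₁0] with t ht
      obtain ⟨ht1, ht2⟩ := ht
      exact mul_nonneg (hnonneg t ⟨ht1, by linarith⟩) (Real.exp_pos _).le
    · filter_upwards [Ioo_mem_nhdsGT hδ₁0] with t ht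
      exact hnum_small t ht.1 ht.2.le
  -- integrability of the full integrand F
  have hIcontOn : ∀ u : ℝ, 0 < u → u ≤ 2 →
      ContinuousOn (fun t => ∫ s in t..2, ω s / s) (Set.Icc u 2) := by
    intro u hu0 hu2
    have hint : IntegrableOn (fun s => ω s / s) (Set.uIcc u 2) volume := by
      rw [Set.uIcc_of_le hu2, integrableOn_Icc_iff_integrableOn_Ioc]
      have := hgint u 2 hu0 hu2 le_rfl
      rwa [intervalIntegrable_iff, Set.uIoc_of_le hu2] at this
    have := continuousOn_primitive_interval_left (a := u) (b := 2) hint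
    rwa [Set.uIcc_of_le hu2] at this
  have hFint : ∀ u v : ℝ, 0 < u → u ≤ v → v ≤ 2 →
      IntervalIntegrable
        (fun t => (ω t / t ^ 2) * Real.exp (Cstar * ∫ s in t..2, ω s / s))
        volume u v := by
    intro u v hu0 huv hv2
    rw [intervalIntegrable_iff, Set.uIoc_of_le huv]
    have hmes : AEStronglyMeasurable
        (fun t => (ω t / t ^ 2) * Real.exp (Cstar * ∫ s in t..2, ω s / s))
        (volume.restrict (Set.Ioc u v)) := by
      apply AEStronglyMeasurable.mul
      · exact (hmeas.div (measurable_id.pow_const 2)).aestronglyMeasurable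
      · have hc : ContinuousOn
            (fun t => Real.exp (Cstar * ∫ s in t..2, ω s / s)) (Set.Ioc u v) := by
          apply Real.continuous_exp.comp_continuousOn
          apply ContinuousOn.mul continuousOn_const
          exact (hIcontOn u hu0 (huv.trans hv2)).mono
            (fun x hx => ⟨hx.1.le, hx.2.trans hv2⟩)
        exact hc.aestronglyMeasurable measurableSet_Ioc
    refine Integrable.mono' (g := fun _ => B * (u ^ 2)⁻¹)
      (integrableOn_const measure_Ioc_lt_top.ne) hmes ?_
    refine (ae_restrict_iff' measurableSet_Ioc).2 (ae_of_all _ fun t ht => ?_)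
    have ht0 : 0 < t := lt_of_lt_of_le hu0 ht.1.le
    have ht2 : t ≤ 2 := ht.2.trans hv2
    have hF0 : 0 ≤ (ω t / t ^ 2) * Real.exp (Cstar * ∫ s in t..2, ω s / s) := by
      apply mul_nonneg (div_nonneg (hnonneg t ⟨ht0, ht2⟩) (by positivity)) (Real.exp_pos _).le
    rw [Real.norm_eq_abs, abs_of_nonneg hF0]
    have hnum := hnum_bdd t ht0 ht2
    have ht2pos : (0:ℝ) < t ^ 2 := by positivity
    have hu2pos : (0:ℝ) < u ^ 2 := by positivity
    have hut : u ^ 2 ≤ t ^ 2 := by nlinarith [ht.1.le]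
    calc (ω t / t ^ 2) * Real.exp (Cstar * ∫ s in t..2, ω s / s)
        = (ω t * Real.exp (Cstar * ∫ s in t..2, ω s / s)) / t ^ 2 := by ring
      _ ≤ B / t ^ 2 := by gcongr
      _ ≤ B / u ^ 2 := by gcongr
      _ = B * (u ^ 2)⁻¹ := div_eq_mul_inv _ _
  -- the main tendsto statement
  have hmain : Tendsto
      (fun r : ℝ => r * ∫ t in r..2,
        (ω t / t ^ 2) * Real.exp (Cstar * ∫ s in t..2, ω s / s))
      (nhdsWithin 0 (Set.Ioi 0)) (nhds 0) := by
    rw [Metric.tendsto_nhdsWithin_nhds]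
    intro η hη
    rw [Metric.tendsto_nhdsWithin_nhds] at hnum_tendsto
    obtain ⟨σ, hσ0, hσ⟩ := hnum_tendsto (η / 3) (by linarith)
    set σ' : ℝ := min (σ / 2) 1 with hσ'def
    have hσ'0 : 0 < σ' := lt_min (by linarith) one_pos
    have hσ'1 : σ' ≤ 1 := min_le_right _ _
    have hσ'σ : σ' < σ := lt_of_le_of_lt (min_le_left _ _) (by linarith)
    have hσ'2 : σ' < 2 := by linarith
    refine ⟨min σ' (η * σ' / (3 * (B + 1))), by positivity, ?_⟩
    intro r hr hrd
    have hr0 : 0 < r := hr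
    rw [Real.dist_eq, sub_zero, abs_of_pos hr0] at hrd
    have hrσ' : r < σ' := lt_of_lt_of_le hrd (min_le_left _ _)
    have hrB : r < η * σ' / (3 * (B + 1)) := lt_of_lt_of_le hrd (min_le_right _ _)
    have hr2 : r < 2 := by linarith
    -- nonnegativity of the整 integral
    have hFnonneg : ∀ x ∈ Set.Icc r 2,
        0 ≤ (ω x / x ^ 2) * Real.exp (Cstar * ∫ s in x..2, ω s / s) := by
      intro x hx
      have hx0 : 0 < x := lt_of_lt_of_le hr0 hx.1
      exact mul_nonneg (div_nonneg (hnonneg x ⟨hx0, hx.2⟩) (by positivity)) (Real.exp_pos _).le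
    have hintnn : 0 ≤ ∫ t in r..2,
        (ω t / t ^ 2) * Real.exp (Cstar * ∫ s in t..2, ω s / s) :=
      intervalIntegral.integral_nonneg hr2.le (fun u hu => hFnonneg u hu)
    have hfnn : 0 ≤ r * ∫ t in r..2,
        (ω t / t ^ 2) * Real.exp (Cstar * ∫ s in t..2, ω s / s) :=
      mul_nonneg hr0.le hintnn
    rw [Real.dist_eq, sub_zero, abs_of_nonneg hfnn]
    -- split the integral at σ'
    have hsplit : (∫ t in r..2,
        (ω t / t ^ 2) * Real.exp (Cstar * ∫ s in t..2, ω s / s)) =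
        (∫ t in r..σ', (ω t / t ^ 2) * Real.exp (Cstar * ∫ s in t..2, ω s / s)) +
        (∫ t in σ'..2, (ω t / t ^ 2) * Real.exp (Cstar * ∫ s in t..2, ω s / s)) :=
      (integral_add_adjacent_intervals (hFint r σ' hr0 hrσ'.le hσ'2.le)
        (hFint σ' 2 hσ'0 hσ'2.le le_rfl)).symm
    -- integral of (t^2)⁻¹
    have hinv2 : ∀ u v : ℝ, 0 < u → u ≤ v →
        (∫ t in u..v, ((t ^ 2)⁻¹ : ℝ)) = u⁻¹ - v⁻¹ := by
      intro u v hu0 huv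
      have : (∫ t in u..v, ((t ^ 2)⁻¹ : ℝ)) = (fun t : ℝ => -t⁻¹) v - (fun t : ℝ => -t⁻¹) u := by
        apply integral_eq_sub_of_hasDerivAt
        · intro x hx
          rw [Set.uIcc_of_le huv] at hx
          have hx0 : x ≠ 0 := ne_of_gt (lt_of_lt_of_le hu0 hx.1)
          have := (hasDerivAt_inv hx0).neg
          exact this.congr_deriv (by ring)
        · apply ContinuousOn.intervalIntegrable
          apply ContinuousOn.inv₀ (continuousOn_pow 2)
          intro x hx
          rw [Set.uIcc_of_le huv] at hx
          have : 0 < x := lt_of_lt_of_le hu0 hx.1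
          positivity
      rw [this]; ring
    have hinv2int : ∀ u v : ℝ, 0 < u → u ≤ v →
        IntervalIntegrable (fun t : ℝ => (η / 3) * (t ^ 2)⁻¹) volume u v := by
      intro u v hu0 huv
      apply ContinuousOn.intervalIntegrable
      apply ContinuousOn.mul continuousOn_const
      apply ContinuousOn.inv₀ (continuousOn_pow 2)
      intro x hx
      rw [Set.uIcc_of_le huv] at hx
      have : 0 < x := lt_of_lt_of_le hu0 hx.1
      positivity
    -- first piece
    have hest1 : (∫ t in r..σ',
        (ω t / t ^ 2) * Real.exp (Cstar * ∫ s in t..2, ω s / s)) ≤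
        (η / 3) * (r⁻¹ - σ'⁻¹) := by
      have hmono1 : (∫ t in r..σ',
          (ω t / t ^ 2) * Real.exp (Cstar * ∫ s in t..2, ω s / s)) ≤
          ∫ t in r..σ', (η / 3) * (t ^ 2)⁻¹ := by
        apply integral_mono_on hrσ'.le (hFint r σ' hr0 hrσ'.le hσ'2.le)
          (hinv2int r σ' hr0 hrσ'.le)
        intro t ht
        have ht0 : 0 < t := lt_of_lt_of_le hr0 ht.1
        have htσ : t < σ := lt_of_le_of_lt ht.2 hσ'σ
        have hnum := hσ (Set.mem_Ioi.2 ht0) (by rw [Real.dist_eq, sub_zero, abs_of_pos ht0]; exact htσ)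
        rw [Real.dist_eq, sub_zero] at hnum
        have hnum' : ω t * Real.exp (Cstar * ∫ s in t..2, ω s / s) ≤ η / 3 :=
          le_trans (le_abs_self _) hnum.le
        have ht2pos : (0:ℝ) < t ^ 2 := by positivity
        calc (ω t / t ^ 2) * Real.exp (Cstar * ∫ s in t..2, ω s / s)
            = (ω t * Real.exp (Cstar * ∫ s in t..2, ω s / s)) / t ^ 2 := by ring
          _ ≤ (η / 3) / t ^ 2 := by gcongr
          _ = (η / 3) * (t ^ 2)⁻¹ := div_eq_mul_inv _ _
      have hval : (∫ t in r..σ', (η / 3) * (t ^ 2)⁻¹) = (η / 3) * (r⁻¹ - σ'⁻¹) := by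
        rw [intervalIntegral.integral_const_mul, hinv2 r σ' hr0 hrσ'.le]
      linarith
    -- second piece
    have hest2 : (∫ t in σ'..2,
        (ω t / t ^ 2) * Real.exp (Cstar * ∫ s in t..2, ω s / s)) ≤
        B * (σ'⁻¹ - 2⁻¹) := by
      have hBint : IntervalIntegrable (fun t : ℝ => B * (t ^ 2)⁻¹) volume σ' 2 := by
        apply ContinuousOn.intervalIntegrable
        apply ContinuousOn.mul continuousOn_const
        apply ContinuousOn.inv₀ (continuousOn_pow 2)
        intro x hx
        rw [Set.uIcc_of_le hσ'2.le] at hx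
        have : 0 < x := lt_of_lt_of_le hσ'0 hx.1
        positivity
      have hmono2 : (∫ t in σ'..2,
          (ω t / t ^ 2) * Real.exp (Cstar * ∫ s in t..2, ω s / s)) ≤
          ∫ t in σ'..2, B * (t ^ 2)⁻¹ := by
        apply integral_mono_on hσ'2.le (hFint σ' 2 hσ'0 hσ'2.le le_rfl) hBint
        intro t ht
        have ht0 : 0 < t := lt_of_lt_of_le hσ'0 ht.1
        have hnum := hnum_bdd t ht0 ht.2
        have ht2pos : (0:ℝ) < t ^ 2 := by positivity
        calc (ω t / t ^ 2) * Real.exp (Cstar * ∫ s in t..2, ω s / s)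
            = (ω t * Real.exp (Cstar * ∫ s in t..2, ω s / s)) / t ^ 2 := by ring
          _ ≤ B / t ^ 2 := by gcongr
          _ = B * (t ^ 2)⁻¹ := div_eq_mul_inv _ _
      have hval : (∫ t in σ'..2, B * (t ^ 2)⁻¹) = B * (σ'⁻¹ - 2⁻¹) := by
        rw [intervalIntegral.integral_const_mul, hinv2 σ' 2 hσ'0 hσ'2.le]
      linarith
    -- combine
    have hσ'inv : 0 < σ'⁻¹ := inv_pos.2 hσ'0
    have hcalc1 : r * ((η / 3) * (r⁻¹ - σ'⁻¹)) ≤ η / 3 := by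
      have : r * ((η / 3) * (r⁻¹ - σ'⁻¹)) = (η/3) * (r * r⁻¹) - (η/3) * (r * σ'⁻¹) := by ring
      rw [this, mul_inv_cancel₀ (ne_of_gt hr0)]
      have : 0 ≤ (η/3) * (r * σ'⁻¹) := by positivity
      linarith
    have hcalc2 : r * (B * (σ'⁻¹ - 2⁻¹)) < η / 3 := by
      have hst : r * (B * (σ'⁻¹ - 2⁻¹)) ≤ r * ((B+1) * σ'⁻¹) := by
        have h2inv : (0:ℝ) ≤ 2⁻¹ := by norm_num
        have hBσ : B * (σ'⁻¹ - 2⁻¹) ≤ (B+1) * σ'⁻¹ := by nlinarith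
        exact mul_le_mul_of_nonneg_left hBσ hr0.le
      have hlast : r * ((B+1) * σ'⁻¹) < η / 3 := by
        rw [lt_div_iff₀ (by positivity : (0:ℝ) < 3 * (B + 1))] at hrB
        calc r * ((B+1) * σ'⁻¹) < (η * σ') * ((B+1) * σ'⁻¹) / (3 * (B+1)) := by
              rw [lt_div_iff₀ (by positivity : (0:ℝ) < 3 * (B + 1))]
              have hpos : (0:ℝ) < (B+1) * σ'⁻¹ := by positivity
              calc r * ((B+1) * σ'⁻¹) * (3 * (B+1)) = (r * (3 * (B+1))) * ((B+1) * σ'⁻¹) := by ring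
                _ < (η * σ') * ((B+1) * σ'⁻¹) := by
                    apply mul_lt_mul_of_pos_right _ hpos
                    linarith [hrB]
          _ = η / 3 := by field_simp
        done
      linarith
    calc r * ∫ t in r..2,
          (ω t / t ^ 2) * Real.exp (Cstar * ∫ s in t..2, ω s / s)
        = r * ((∫ t in r..σ', (ω t / t ^ 2) * Real.exp (Cstar * ∫ s in t..2, ω s / s)) +
          (∫ t in σ'..2, (ω t / t ^ 2) * Real.exp (Cstar * ∫ s in t..2, ω s / s))) := by
          rw [hsplit]
      _ ≤ r * ((η / 3) * (r⁻¹ - σ'⁻¹)) + r * (B * (σ'⁻¹ - 2⁻¹)) := by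
          have := mul_le_mul_of_nonneg_left (add_le_add hest1 hest2) hr0.le
          linarith [this]
      _ < η / 3 + η / 3 := by linarith
      _ < η := by linarith
  exact hmain.limsup_eq
end

section
/- Let ω : (0, 2] → [0, ∞) be measurable and bounded, and let C* > 0. Suppose there exist b > 1/C* and δ ∈ (0,1) such that ω(t) ≥ b (ln(1/t))^{-1} for all t ∈ (0, δ). Then limsup_{r → 0+} r ∫_r^2 (ω(t)/t²) exp( C* ∫_t^2 (ω(s)/s) ds ) dt = +∞. -/
open Real Filter MeasureTheory intervalIntegral

theorem limsup_X_eq_top (ω : ℝ → ℝ) (Cstar b δ : ℝ)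
    (hmeas : Measurable ω)
    (hnonneg : ∀ t ∈ Set.Ioc (0 : ℝ) 2, 0 ≤ ω t)
    (hbdd : ∃ M : ℝ, ∀ t ∈ Set.Ioc (0 : ℝ) 2, ω t ≤ M)
    (hCstar : 0 < Cstar) (hb : 1 / Cstar < b) (hδ0 : 0 < δ) (hδ1 : δ < 1)
    (hbig : ∀ t ∈ Set.Ioo (0 : ℝ) δ, b * (Real.log (1 / t))⁻¹ ≤ ω t) :
    Filter.limsup
      (fun r : ℝ => ((r * ∫ t in r..2,
        (ω t / t ^ 2) * Real.exp (Cstar * ∫ s in t..2, ω s / s) : ℝ) : EReal))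
      (nhdsWithin 0 (Set.Ioi 0)) = ⊤ := by
  obtain ⟨M, hM⟩ := hbdd
  have hM0 : 0 ≤ M := le_trans (hnonneg 2 ⟨two_pos, le_refl 2⟩) (hM 2 ⟨two_pos, le_refl 2⟩)
  set g : ℝ → ℝ := fun s => ω s / s with hgdef
  set F : ℝ → ℝ := fun t => (ω t / t ^ 2) * Real.exp (Cstar * ∫ s in t..2, g s) with hFdef
  have hb0 : 0 < b := lt_trans (div_pos one_pos hCstar) hb
  have hβ : 1 < Cstar * b := by
    rw [div_lt_iff₀ hCstar] at hb; linarith [hb]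
  set β : ℝ := Cstar * b with hβdef
  -- interval integrability of g
  have hgInt : ∀ x y : ℝ, 0 < x → x ≤ y → y ≤ 2 → IntervalIntegrable g volume x y := by
    intro x y hx hxy hy
    rw [intervalIntegrable_iff_integrableOn_Ioc_of_le hxy]
    refine Integrable.mono' (integrable_const (M / x))
      (hmeas.div measurable_id).aestronglyMeasurable ?_
    filter_upwards [ae_restrict_mem measurableSet_Ioc] with s hs
    have hs0 : 0 < s := hx.trans hs.1
    have hsm : s ∈ Set.Ioc (0:ℝ) 2 := ⟨hs0, hs.2.trans hy⟩
    rw [Real.norm_eq_abs, abs_of_nonneg (div_nonneg (hnonneg s hsm) hs0.le)]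
    exact div_le_div₀ hM0 (hM s hsm) hx hs.1.le
  -- F is nonnegative on (0,2]
  have hFnn : ∀ t ∈ Set.Ioc (0:ℝ) 2, 0 ≤ F t := by
    intro t ht
    exact mul_nonneg (div_nonneg (hnonneg t ht) (by positivity)) (Real.exp_nonneg _)
  -- upper bound for the inner integral
  have hInn : ∀ t : ℝ, 0 < t → t ≤ 2 → (∫ s in t..2, g s) ≤ M * Real.log (2 / t) := by
    intro t ht ht2
    have hMsInt : IntervalIntegrable (fun s => M / s) volume t 2 := by
      apply ContinuousOn.intervalIntegrable
      rw [Set.uIcc_of_le ht2]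
      exact continuousOn_const.div continuousOn_id
        (fun s hs => ne_of_gt (ht.trans_le hs.1))
    have h1 : (∫ s in t..2, g s) ≤ ∫ s in t..2, M / s := by
      refine integral_mono_on ht2 (hgInt t 2 ht ht2 le_rfl) hMsInt ?_
      intro s hs
      have hs0 : 0 < s := ht.trans_le hs.1
      exact div_le_div_of_nonneg_right (hM s ⟨hs0, hs.2⟩) hs0.le
    have hnot : (0:ℝ) ∉ Set.uIcc t 2 := by
      intro h
      rw [Set.uIcc_of_le ht2] at h
      exact absurd h.1 (not_le.2 ht)
    have h2 : (∫ s in t..2, M / s) = M * Real.log (2 / t) := by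
      have h3 : (∫ s in t..2, M / s) = M * ∫ s in t..2, s⁻¹ := by
        simp_rw [div_eq_mul_inv]
        exact intervalIntegral.integral_const_mul M _
      rw [h3, integral_inv hnot]
    linarith [h1, h2]
  -- interval integrability of F
  have hFInt : ∀ a c : ℝ, 0 < a → a ≤ c → c ≤ 2 → IntervalIntegrable F volume a c := by
    intro a c ha hac hc2
    have ha2 : a ≤ 2 := hac.trans hc2
    have hgIcc : IntegrableOn g (Set.Icc a 2) :=
      (integrableOn_Icc_iff_integrableOn_Ioc enorm_ne_top).2 (hgInt a 2 ha ha2 le_rfl).1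
    have hIcont : ContinuousOn (fun t => ∫ s in t..2, g s) (Set.Icc a 2) := by
      have := intervalIntegral.continuousOn_primitive_interval_left
        (μ := volume) (f := g) (a := a) (b := 2) (by rwa [Set.uIcc_of_le ha2])
      rwa [Set.uIcc_of_le ha2] at this
    rw [intervalIntegrable_iff_integrableOn_Ioc_of_le hac]
    have hsub : Set.Ioc a c ⊆ Set.Icc a 2 := fun x hx => ⟨hx.1.le, hx.2.trans hc2⟩
    refine Integrable.mono'
      (integrable_const ((M / a ^ 2) * Real.exp (Cstar * (M * Real.log (2 / a))))) ?_ ?_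
    · have hImeas : AEMeasurable (fun t => ∫ s in t..2, g s)
          (volume.restrict (Set.Ioc a c)) :=
        (hIcont.mono hsub).aemeasurable measurableSet_Ioc
      exact ((hmeas.div (measurable_id.pow_const 2)).aemeasurable.mul
        (Real.measurable_exp.comp_aemeasurable (hImeas.const_mul Cstar))).aestronglyMeasurable
    · filter_upwards [ae_restrict_mem measurableSet_Ioc] with t ht
      have ht0 : 0 < t := ha.trans ht.1
      have htm : t ∈ Set.Ioc (0:ℝ) 2 := ⟨ht0, ht.2.trans hc2⟩
      have hlog : Real.log (2 / t) ≤ Real.log (2 / a) :=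
        Real.log_le_log (by positivity) (div_le_div_of_nonneg_left (by norm_num) ha ht.1.le)
      have hIt : (∫ s in t..2, g s) ≤ M * Real.log (2 / a) :=
        le_trans (hInn t ht0 htm.2) (mul_le_mul_of_nonneg_left hlog hM0)
      rw [Real.norm_eq_abs, abs_of_nonneg (hFnn t htm)]
      refine mul_le_mul ?_ ?_ (Real.exp_nonneg _) (by positivity)
      · exact div_le_div₀ hM0 (hM t htm) (by positivity)
          (pow_le_pow_left₀ ha.le ht.1.le 2)
      · exact Real.exp_le_exp.2 (mul_le_mul_of_nonneg_left hIt hCstar.le)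
  -- constants
  set D : ℝ := -Real.log (δ / 2) with hDdef
  have hD0 : 0 < D := by
    rw [hDdef, neg_pos]
    exact Real.log_neg (by positivity) (by linarith)
  set c0 : ℝ := b * D ^ (-β) / 4 with hc0def
  have hc0 : 0 < c0 := by
    have := Real.rpow_pos_of_pos hD0 (-β)
    positivity
  -- the key lower bound
  have key : ∀ r : ℝ, 0 < r → 4 * r ≤ δ →
      c0 * (-Real.log (2 * r)) ^ (β - 1) ≤ r * ∫ t in r..2, F t := by
    intro r hr hr4
    have h2r : 2 * r ≤ δ / 2 := by linarith
    have h2r1 : 2 * r < 1 := by linarith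
    have hδ2 : (0:ℝ) < δ / 2 := by positivity
    have hδ22 : δ / 2 ≤ 2 := by linarith
    set Lr : ℝ := -Real.log (2 * r) with hLrdef
    have hLr0 : 0 < Lr := by
      rw [hLrdef, neg_pos]; exact Real.log_neg (by positivity) h2r1
    set K : ℝ := b * Lr ^ (β - 1) * D ^ (-β) / (2 * r) ^ 2 with hKdef
    -- pointwise lower bound on [r, 2r]
    have hpt : ∀ t ∈ Set.Icc r (2 * r), K ≤ F t := by
      intro t ht
      have ht0 : 0 < t := hr.trans_le ht.1
      have ht2r : t ≤ 2 * r := ht.2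
      have htδ2 : t ≤ δ / 2 := le_trans ht2r h2r
      have ht1 : t < 1 := lt_of_le_of_lt htδ2 (by linarith)
      have hA0 : 0 < -Real.log t := by
        rw [neg_pos]; exact Real.log_neg ht0 ht1
      -- lower bound for inner integral
      have hlow : b * (Real.log (-Real.log t) - Real.log D) ≤ ∫ s in t..2, g s := by
        have hsplit : (∫ s in t..(δ/2), g s) + (∫ s in (δ/2)..2, g s) = ∫ s in t..2, g s :=
          intervalIntegral.integral_add_adjacent_intervals
            (hgInt t (δ/2) ht0 htδ2 hδ22) (hgInt (δ/2) 2 hδ2 hδ22 le_rfl)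
        have hnn2 : 0 ≤ ∫ s in (δ/2)..2, g s := by
          refine intervalIntegral.integral_nonneg hδ22 ?_
          intro s hs
          exact div_nonneg (hnonneg s ⟨hδ2.trans_le hs.1, hs.2⟩) ((hδ2.trans_le hs.1).le)
        have hlowInt : IntervalIntegrable (fun s => b * (Real.log (1 / s))⁻¹ / s)
            volume t (δ/2) := by
          apply ContinuousOn.intervalIntegrable
          rw [Set.uIcc_of_le htδ2]
          have hpos : ∀ s ∈ Set.Icc t (δ/2), 0 < s := fun s hs => ht0.trans_le hs.1
          have hlt1 : ∀ s ∈ Set.Icc t (δ/2), s < 1 := fun s hs =>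
            lt_of_le_of_lt hs.2 (by linarith)
          refine ContinuousOn.div (continuousOn_const.mul (ContinuousOn.inv₀ ?_ ?_))
            continuousOn_id (fun s hs => (hpos s hs).ne')
          · refine Real.continuousOn_log.comp
              (continuousOn_const.div continuousOn_id (fun s hs => (hpos s hs).ne')) ?_
            intro s hs
            simp only [Set.mem_compl_iff, Set.mem_singleton_iff]
            have := hpos s hs
            positivity
          · intro s hs
            have : 0 < Real.log (1 / s) := by
              rw [one_div]
              exact Real.log_pos (one_lt_inv_iff₀.2 ⟨hpos s hs, hlt1 s hs⟩)
            exact this.ne'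
        have hmono : (∫ s in t..(δ/2), b * (Real.log (1 / s))⁻¹ / s) ≤
            ∫ s in t..(δ/2), g s := by
          refine integral_mono_on htδ2 hlowInt (hgInt t (δ/2) ht0 htδ2 hδ22) ?_
          intro s hs
          have hs0 : 0 < s := ht0.trans_le hs.1
          have hsδ : s < δ := lt_of_le_of_lt hs.2 (by linarith)
          exact div_le_div_of_nonneg_right (hbig s ⟨hs0, hsδ⟩) hs0.le
        have hftc : (∫ s in t..(δ/2), b * (Real.log (1 / s))⁻¹ / s) =
            (-b * Real.log (-Real.log (δ/2))) - (-b * Real.log (-Real.log t)) := by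
          refine intervalIntegral.integral_eq_sub_of_hasDerivAt (f := fun u : ℝ => -b * Real.log (-Real.log u)) ?_ hlowInt
          intro s hs
          rw [Set.uIcc_of_le htδ2] at hs
          have hs0 : 0 < s := ht0.trans_le hs.1
          have hs1 : s < 1 := lt_of_le_of_lt hs.2 (by linarith)
          have hlogne : -Real.log s ≠ 0 := by
            have : Real.log s < 0 := Real.log_neg hs0 hs1
            simpa using this.ne
          have h1 : HasDerivAt (fun u : ℝ => -Real.log u) (-s⁻¹) s :=
            (Real.hasDerivAt_log hs0.ne').neg
          have h2 : HasDerivAt (fun u : ℝ => Real.log (-Real.log u))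
              ((-Real.log s)⁻¹ * (-s⁻¹)) s :=
            by have := (Real.hasDerivAt_log hlogne).comp s h1; exact this
          have h3 : HasDerivAt (fun u : ℝ => -b * Real.log (-Real.log u))
              (-b * ((-Real.log s)⁻¹ * (-s⁻¹))) s := h2.const_mul (-b)
          refine h3.congr_deriv (Eq.symm ?_)
          rw [one_div, Real.log_inv]
          have hlne : Real.log s ≠ 0 := by
            have : Real.log s < 0 := Real.log_neg hs0 hs1
            exact this.ne
          field_simp
        have hval : b * (Real.log (-Real.log t) - Real.log D) ≤ ∫ s in t..(δ/2), g s := by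
          have heq : b * (Real.log (-Real.log t) - Real.log D)
              = (-b * Real.log (-Real.log (δ/2))) - (-b * Real.log (-Real.log t)) := by
            rw [hDdef]; ring
          rw [heq, ← hftc]; exact hmono
        rw [← hsplit]
        linarith [hval, hnn2]
      -- from the inner-integral bound to the exponential bound
      have hexp : (-Real.log t) ^ β * D ^ (-β) ≤ Real.exp (Cstar * ∫ s in t..2, g s) := by
        have h1 : Cstar * (b * (Real.log (-Real.log t) - Real.log D)) ≤
            Cstar * ∫ s in t..2, g s := mul_le_mul_of_nonneg_left hlow hCstar.le
        have h2 : (-Real.log t) ^ β * D ^ (-β) =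
            Real.exp (Cstar * (b * (Real.log (-Real.log t) - Real.log D))) := by
          rw [Real.rpow_def_of_pos hA0, Real.rpow_def_of_pos hD0, ← Real.exp_add]
          congr 1
          rw [hβdef]; ring
        rw [h2]
        exact Real.exp_le_exp.2 h1
      -- assemble
      have hωt : b * (Real.log (1 / t))⁻¹ ≤ ω t :=
        hbig t ⟨ht0, lt_of_le_of_lt htδ2 (by linarith)⟩
      have hAinv : (Real.log (1 / t))⁻¹ = (-Real.log t)⁻¹ := by
        rw [one_div, Real.log_inv]
      have hstep1 : b * (-Real.log t)⁻¹ / t ^ 2 * ((-Real.log t) ^ β * D ^ (-β)) ≤ F t := by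
        rw [hFdef]
        refine mul_le_mul ?_ hexp (by positivity) (div_nonneg (hnonneg t ⟨ht0, by linarith⟩) (by positivity))
        rw [← hAinv]
        exact div_le_div_of_nonneg_right hωt (by positivity)
      have hcalc : b * (-Real.log t)⁻¹ / t ^ 2 * ((-Real.log t) ^ β * D ^ (-β)) =
          b * (-Real.log t) ^ (β - 1) * D ^ (-β) / t ^ 2 := by
        rw [Real.rpow_sub hA0, Real.rpow_one]
        field_simp
      have hLrA : Lr ≤ -Real.log t := by
        rw [hLrdef]
        have : Real.log t ≤ Real.log (2 * r) := Real.log_le_log ht0 ht2r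
        linarith
      have hstep2 : K ≤ b * (-Real.log t) ^ (β - 1) * D ^ (-β) / t ^ 2 := by
        rw [hKdef]
        have hApow : Lr ^ (β - 1) ≤ (-Real.log t) ^ (β - 1) :=
          Real.rpow_le_rpow hLr0.le hLrA (by linarith)
        have hDp : (0:ℝ) < D ^ (-β) := Real.rpow_pos_of_pos hD0 (-β)
        have htp : t ^ 2 ≤ (2 * r) ^ 2 := pow_le_pow_left₀ ht0.le ht2r 2
        exact div_le_div₀
          (mul_nonneg (mul_nonneg hb0.le (Real.rpow_nonneg hA0.le _)) hDp.le)
          (mul_le_mul_of_nonneg_right (mul_le_mul_of_nonneg_left hApow hb0.le) hDp.le)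
          (by positivity) htp
      calc K ≤ b * (-Real.log t) ^ (β - 1) * D ^ (-β) / t ^ 2 := hstep2
        _ = b * (-Real.log t)⁻¹ / t ^ 2 * ((-Real.log t) ^ β * D ^ (-β)) := hcalc.symm
        _ ≤ F t := hstep1
    -- integrate the pointwise bound
    have hr2 : r ≤ 2 := by linarith
    have h2r2 : 2 * r ≤ 2 := by linarith
    have hrr : r ≤ 2 * r := by linarith
    have hsplit : (∫ t in r..(2*r), F t) + (∫ t in (2*r)..2, F t) = ∫ t in r..2, F t :=
      intervalIntegral.integral_add_adjacent_intervals
        (hFInt r (2*r) hr hrr h2r2) (hFInt (2*r) 2 (by positivity) h2r2 le_rfl)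
    have hnn2 : 0 ≤ ∫ t in (2*r)..2, F t := by
      refine intervalIntegral.integral_nonneg h2r2 ?_
      intro t ht
      exact hFnn t ⟨lt_of_lt_of_le (by positivity) ht.1, ht.2⟩
    have hmono : K * r ≤ ∫ t in r..(2*r), F t := by
      have : (∫ _ in r..(2*r), K) ≤ ∫ t in r..(2*r), F t :=
        integral_mono_on hrr intervalIntegrable_const (hFInt r (2*r) hr hrr h2r2) hpt
      rwa [intervalIntegral.integral_const, smul_eq_mul, show 2*r - r = r by ring,
        mul_comm] at this
    have hint : K * r ≤ ∫ t in r..2, F t := by linarith [hmono, hnn2, hsplit]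
    have : r * (K * r) ≤ r * ∫ t in r..2, F t :=
      mul_le_mul_of_nonneg_left hint hr.le
    refine le_trans (le_of_eq ?_) this
    rw [hKdef, hc0def, hLrdef]
    field_simp
    ring
  -- tendsto of the lower bound to atTop
  have htend : Tendsto (fun r : ℝ => c0 * (-Real.log (2 * r)) ^ (β - 1))
      (nhdsWithin 0 (Set.Ioi 0)) atTop := by
    apply Tendsto.const_mul_atTop hc0
    apply (tendsto_rpow_atTop (by linarith : (0:ℝ) < β - 1)).comp
    apply tendsto_neg_atBot_atTop.comp
    have h2rt : Tendsto (fun r : ℝ => 2 * r) (nhdsWithin 0 (Set.Ioi 0))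
        (nhdsWithin 0 (Set.Ioi 0)) := by
      refine tendsto_nhdsWithin_of_tendsto_nhds_of_eventually_within _ ?_ ?_
      · have h0 : Tendsto (fun r : ℝ => 2 * r) (nhds 0) (nhds (2 * 0)) :=
          (continuous_const.mul continuous_id).tendsto 0
        simpa using h0.mono_left nhdsWithin_le_nhds
      · filter_upwards [self_mem_nhdsWithin] with x hx
        simp only [Set.mem_Ioi] at hx ⊢
        positivity
    exact Real.tendsto_log_nhdsGT_zero.comp h2rt
  -- conclude
  rw [EReal.eq_top_iff_forall_lt]
  intro y
  have hev1 : ∀ᶠ r in nhdsWithin (0:ℝ) (Set.Ioi 0), y + 1 ≤ c0 * (-Real.log (2 * r)) ^ (β - 1) :=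
    htend.eventually_ge_atTop (y + 1)
  have hev2 : ∀ᶠ r in nhdsWithin (0:ℝ) (Set.Ioi 0), r ∈ Set.Ioo (0:ℝ) (δ/4) :=
    Ioo_mem_nhdsGT_of_mem ⟨le_refl 0, by positivity⟩
  have hev : ∀ᶠ r in nhdsWithin (0:ℝ) (Set.Ioi 0),
      ((y + 1 : ℝ) : EReal) ≤ ((r * ∫ t in r..2, F t : ℝ) : EReal) := by
    filter_upwards [hev1, hev2] with r h1 h2
    rw [EReal.coe_le_coe_iff]
    exact le_trans h1 (key r h2.1 (by linarith [h2.2]))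
  calc (y : EReal) < ((y + 1 : ℝ) : EReal) := by
        rw [EReal.coe_lt_coe_iff]; linarith
    _ ≤ _ := le_limsup_of_frequently_le' hev.frequently
end

section
/- Let ℓ(x) = ln ln ln (64/|x|) for x ∈ B₂ \ {0} ⊂ ℝⁿ. Then there exist constants c, C > 0 (depending on n) such that for all sufficiently small r > 0, the L² mean oscillation ω_{ℓ,2}(r) = sup_{x ∈ B₂} ( |B_r(x)|^{-1} ∫_{B_r(x)} |ℓ(y) − (ℓ)_{B_r(x)}|² dy )^{1/2} satisfies ω_{ℓ,2}(r) ≤ C / ( ln(64/r) · ln ln(64/r) ). -/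
open Real MeasureTheory Metric

/-- The `L²` mean oscillation of a scalar function `f` at scale `r`,
with centers in the ball of radius 2. -/
noncomputable def meanOsc2 {n : ℕ} (f : EuclideanSpace ℝ (Fin n) → ℝ) (r : ℝ) : ℝ :=
  ⨆ x : (ball (0 : EuclideanSpace ℝ (Fin n)) 2),
    ((volume (ball (x : EuclideanSpace ℝ (Fin n)) r)).toReal⁻¹ *
      ∫ y in ball (x : EuclideanSpace ℝ (Fin n)) r,
        |f y - (volume (ball (x : EuclideanSpace ℝ (Fin n)) r)).toReal⁻¹ *
          ∫ z in ball (x : EuclideanSpace ℝ (Fin n)) r, f z| ^ (2 : ℝ)) ^ ((1 : ℝ) / 2)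

open ENNReal


lemma aux_log_add {b d : ℝ} (hb : 0 < b) (hd : 0 ≤ d) :
    Real.log (b + d) ≤ Real.log b + d / b := by
  have h1 : Real.log (b + d) - Real.log b = Real.log ((b + d) / b) := by
    rw [Real.log_div (by positivity) hb.ne']
  have h2 : Real.log ((b + d) / b) ≤ (b + d) / b - 1 :=
    Real.log_le_sub_one_of_pos (by positivity)
  have h3 : (b + d) / b - 1 = d / b := by field_simp; ring
  linarith [h1, h2.trans_eq h3]

lemma aux_exp3 : Real.exp 3 ≤ 64 / 3 := by
  have h := Real.exp_one_lt_d9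
  have h3 : Real.exp 3 = Real.exp 1 * Real.exp 1 * Real.exp 1 := by
    rw [← Real.exp_add, ← Real.exp_add]; norm_num
  have h0 : (0:ℝ) < Real.exp 1 := Real.exp_pos 1
  nlinarith [h, h0]

lemma log_ge_three {ρ : ℝ} (h0 : 0 < ρ) (h3 : ρ ≤ 3) : 3 ≤ Real.log (64 / ρ) := by
  rw [Real.le_log_iff_exp_le (by positivity)]
  calc Real.exp 3 ≤ 64 / 3 := aux_exp3
    _ ≤ 64 / ρ := by apply div_le_div_of_nonneg_left (by norm_num) h0 h3

lemma loglog_ge_one {ρ : ℝ} (h0 : 0 < ρ) (h3 : ρ ≤ 3) :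
    1 ≤ Real.log (Real.log (64 / ρ)) := by
  have hL := log_ge_three h0 h3
  rw [Real.le_log_iff_exp_le (by linarith)]
  have h := Real.exp_one_lt_d9
  linarith

/-- monotonicity of `t ↦ t log(64/t) loglog(64/t)` up to scale 3 -/
lemma scale_mono {s t : ℝ} (hs : 0 < s) (hst : s ≤ t) (ht3 : t ≤ 3) :
    s * (Real.log (64 / s) * Real.log (Real.log (64 / s))) ≤
      t * (Real.log (64 / t) * Real.log (Real.log (64 / t))) := by
  have ht : 0 < t := lt_of_lt_of_le hs hst
  set w : ℝ := Real.log t - Real.log s with hw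
  have hw0 : 0 ≤ w := by
    have := Real.log_le_log hs hst
    simp [hw]; linarith
  set L : ℝ := Real.log (64 / t) with hL
  set M : ℝ := Real.log L with hM
  have hL3 : 3 ≤ L := log_ge_three ht ht3
  have hM1 : 1 ≤ M := loglog_ge_one ht ht3
  have hLs : Real.log (64 / s) = L + w := by
    rw [hL, Real.log_div (by norm_num) ht.ne', Real.log_div (by norm_num) hs.ne']
    ring
  have hMs : Real.log (Real.log (64 / s)) ≤ M + w / L := by
    rw [hLs, hM]
    exact aux_log_add (by linarith) hw0
  have hMs0 : 0 ≤ Real.log (Real.log (64 / s)) := by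
    rw [hLs]
    have : M ≤ Real.log (L + w) := by
      apply Real.log_le_log (by linarith) (by linarith)
    linarith
  have hse : s = t * Real.exp (-w) := by
    rw [hw, neg_sub, Real.exp_sub, Real.exp_log hs, Real.exp_log ht]
    field_simp
  -- bounds: L + w ≤ L * exp(w/3), M + w/L ≤ M * exp(w/3)
  have e1 : 1 + w / 3 ≤ Real.exp (w / 3) := by
    have := Real.add_one_le_exp (w / 3); linarith
  have hexp : 0 < Real.exp (w / 3) := Real.exp_pos _
  have b1 : L + w ≤ L * Real.exp (w / 3) := by
    have : L + w ≤ L * (1 + w / 3) := by nlinarith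
    calc L + w ≤ L * (1 + w/3) := this
      _ ≤ L * Real.exp (w/3) := by nlinarith
  have b2 : M + w / L ≤ M * Real.exp (w / 3) := by
    have hwL : w / L ≤ w / 3 := by
      apply div_le_div_of_nonneg_left hw0 (by norm_num) hL3
    have : M + w / L ≤ M * (1 + w / 3) := by nlinarith
    calc M + w/L ≤ M * (1 + w/3) := this
      _ ≤ M * Real.exp (w/3) := by nlinarith
  have hee : Real.exp (-w) * (Real.exp (w/3) * Real.exp (w/3)) ≤ 1 := by
    rw [← Real.exp_add, ← Real.exp_add]
    rw [Real.exp_le_one_iff]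
    linarith
  -- combine
  have hlogs : Real.log (64 / s) * Real.log (Real.log (64 / s))
      ≤ (L * Real.exp (w/3)) * (M * Real.exp (w/3)) := by
    calc Real.log (64 / s) * Real.log (Real.log (64 / s))
        ≤ (L + w) * (M + w / L) :=
          mul_le_mul hLs.le hMs hMs0 (by positivity)
      _ ≤ (L * Real.exp (w/3)) * (M * Real.exp (w/3)) := by
          apply mul_le_mul b1 b2 (by positivity) (by positivity)
  calc s * (Real.log (64 / s) * Real.log (Real.log (64 / s)))
      ≤ (t * Real.exp (-w)) * ((L * Real.exp (w/3)) * (M * Real.exp (w/3))) := by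
        rw [← hse]
        apply mul_le_mul_of_nonneg_left hlogs hs.le
    _ = (t * (L * M)) * (Real.exp (-w) * (Real.exp (w/3) * Real.exp (w/3))) := by ring
    _ ≤ (t * (L * M)) * 1 := by
        apply mul_le_mul_of_nonneg_left hee
        have : 0 < t * (L * M) := by positivity
        exact this.le
    _ = t * (L * M) := by ring

/-- pointwise oscillation bound for the triple log -/
lemma triple_log_osc {t ρ : ℝ} (ht : 0 < t) (htρ : t ≤ ρ) (hρ3 : ρ ≤ 3) :
    0 ≤ Real.log (Real.log (Real.log (64 / t))) - Real.log (Real.log (Real.log (64 / ρ)))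
    ∧ Real.log (Real.log (Real.log (64 / t))) - Real.log (Real.log (Real.log (64 / ρ)))
      ≤ (Real.log ρ - Real.log t) / (Real.log (64 / ρ) * Real.log (Real.log (64 / ρ))) := by
  have hρ : 0 < ρ := lt_of_lt_of_le ht htρ
  set u : ℝ := Real.log ρ - Real.log t with hu
  have hu0 : 0 ≤ u := by
    have := Real.log_le_log ht htρ
    simp [hu]; linarith
  set L : ℝ := Real.log (64 / ρ) with hL
  set M : ℝ := Real.log L with hM
  have hL3 : 3 ≤ L := log_ge_three hρ hρ3
  have hM1 : 1 ≤ M := loglog_ge_one hρ hρ3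
  have hLt : Real.log (64 / t) = L + u := by
    rw [hL, Real.log_div (by norm_num) hρ.ne', Real.log_div (by norm_num) ht.ne']
    ring
  have hMLe : M ≤ Real.log (L + u) := Real.log_le_log (by linarith) (by linarith)
  have hMt : Real.log (L + u) ≤ M + u / L := by
    rw [hM]; exact aux_log_add (by linarith) hu0
  have hgoal2 : Real.log (Real.log (Real.log (64 / t))) = Real.log (Real.log (L + u)) := by rw [hLt]
  constructor
  · have : Real.log M ≤ Real.log (Real.log (L + u)) :=
      Real.log_le_log (by linarith) hMLe
    rw [hgoal2]; linarith
  · have h1 : Real.log (Real.log (L + u)) ≤ Real.log (M + u / L) :=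
      Real.log_le_log (by linarith) hMt
    have h2 : Real.log (M + u / L) ≤ Real.log M + (u / L) / M :=
      aux_log_add (by linarith) (by positivity)
    have h3 : (u / L) / M = u / (L * M) := by field_simp
    rw [hgoal2]
    linarith [h3.le, h3.ge]

/-- `log z ≤ 2 √z` and `(log z)² ≤ 16 √z` for `z ≥ 1` (using rpow). -/
lemma log_le_rpow_half {z : ℝ} (hz : 1 ≤ z) :
    Real.log z ≤ 2 * z ^ ((1:ℝ)/2) ∧ (Real.log z) ^ 2 ≤ 16 * z ^ ((1:ℝ)/2) := by
  have hz0 : 0 < z := by linarith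
  have hq : Real.log (z ^ ((1:ℝ)/4)) = (1/4) * Real.log z := Real.log_rpow hz0 _
  have hh : Real.log (z ^ ((1:ℝ)/2)) = (1/2) * Real.log z := Real.log_rpow hz0 _
  have hq0 : 0 < z ^ ((1:ℝ)/4) := Real.rpow_pos_of_pos hz0 _
  have hh0 : 0 < z ^ ((1:ℝ)/2) := Real.rpow_pos_of_pos hz0 _
  have hq1 : Real.log (z ^ ((1:ℝ)/4)) ≤ z ^ ((1:ℝ)/4) := by
    have := Real.log_le_sub_one_of_pos hq0; linarith
  have hh1 : Real.log (z ^ ((1:ℝ)/2)) ≤ z ^ ((1:ℝ)/2) := by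
    have := Real.log_le_sub_one_of_pos hh0; linarith
  have hsq : (z ^ ((1:ℝ)/4)) ^ 2 = z ^ ((1:ℝ)/2) := by
    rw [← Real.rpow_natCast (z ^ ((1:ℝ)/4)) 2, ← Real.rpow_mul hz0.le]
    norm_num
  have hlog0 : 0 ≤ Real.log z := Real.log_nonneg hz
  constructor
  · linarith
  · have : Real.log z ≤ 4 * z ^ ((1:ℝ)/4) := by linarith
    calc (Real.log z) ^ 2 ≤ (4 * z ^ ((1:ℝ)/4)) ^ 2 := by
          apply pow_le_pow_left₀ hlog0 this
      _ = 16 * (z ^ ((1:ℝ)/4)) ^ 2 := by ring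
      _ = 16 * z ^ ((1:ℝ)/2) := by rw [hsq]

lemma annuli_cover {n : ℕ} {ρ : ℝ} (hρ : 0 < ρ) :
    ball (0 : EuclideanSpace ℝ (Fin n)) ρ ⊆
      {0} ∪ ⋃ k : ℕ, (ball (0 : EuclideanSpace ℝ (Fin n)) (ρ * (2⁻¹:ℝ) ^ k) \
        ball (0 : EuclideanSpace ℝ (Fin n)) (ρ * (2⁻¹:ℝ) ^ (k+1))) := by
  intro y hy
  rcases eq_or_ne y 0 with h0 | h0
  · exact Or.inl h0
  · right
    have hy0 : 0 < ‖y‖ := norm_pos_iff.2 h0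
    have hyρ : ‖y‖ < ρ := by simpa [mem_ball, dist_zero_right] using hy
    have hex : ∃ m : ℕ, ρ * (2⁻¹:ℝ) ^ (m+1) ≤ ‖y‖ := by
      obtain ⟨m, hm⟩ := exists_pow_lt_of_lt_one (div_pos hy0 hρ) (by norm_num : (2⁻¹:ℝ) < 1)
      refine ⟨m, ?_⟩
      have h1 : (2⁻¹:ℝ) ^ (m+1) ≤ (2⁻¹:ℝ) ^ m := by
        apply pow_le_pow_of_le_one (by norm_num) (by norm_num)
        omega
      have h2 : ρ * (2⁻¹:ℝ) ^ m < ‖y‖ := by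
        have := (lt_div_iff₀ hρ).1 hm
        nlinarith [this]
      nlinarith [h1, hρ]
    classical
    set k := Nat.find hex with hk
    have hklow : ρ * (2⁻¹:ℝ) ^ (k+1) ≤ ‖y‖ := Nat.find_spec hex
    have hkhigh : ‖y‖ < ρ * (2⁻¹:ℝ) ^ k := by
      rcases Nat.eq_zero_or_pos k with h | h
      · rw [h]; simpa using hyρ
      · have := Nat.find_min hex (m := k - 1) (by omega)
        push_neg at this
        have hk1 : k - 1 + 1 = k := by omega
        rw [hk1] at this
        exact this
    refine Set.mem_iUnion.2 ⟨k, ?_, ?_⟩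
    · simpa [mem_ball, dist_zero_right] using hkhigh
    · simp only [mem_ball, dist_zero_right, Set.mem_setOf_eq]
      intro hcon
      exact absurd hklow (not_le.2 (by simpa [mem_ball, dist_zero_right] using hcon))

lemma lintegral_rpow_ball {n : ℕ} (hn : 1 ≤ n) {ρ : ℝ} (hρ : 0 < ρ) :
    ∫⁻ y in ball (0 : EuclideanSpace ℝ (Fin n)) ρ,
        ENNReal.ofReal ((ρ / ‖y‖) ^ ((1:ℝ)/2)) ∂volume
      ≤ ENNReal.ofReal (6 * ρ ^ n) * volume (ball (0 : EuclideanSpace ℝ (Fin n)) 1) := by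
  haveI : Nonempty (Fin n) := ⟨⟨0, hn⟩⟩
  haveI : Nontrivial (EuclideanSpace ℝ (Fin n)) := inferInstance
  set E := EuclideanSpace ℝ (Fin n)
  set g : E → ℝ≥0∞ := fun y => ENNReal.ofReal ((ρ / ‖y‖) ^ ((1:ℝ)/2)) with hg
  set S : ℕ → Set E := fun k => (ball (0:E) (ρ * (2⁻¹:ℝ) ^ k) \ ball (0:E) (ρ * (2⁻¹:ℝ) ^ (k+1)))
    with hS
  set V := volume (ball (0:E) 1) with hV
  set c : ℝ := Real.sqrt 2 with hc
  have hc0 : 0 ≤ c := Real.sqrt_nonneg 2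
  have hc2 : c ^ 2 = 2 := Real.sq_sqrt (by norm_num)
  -- annulus bound
  have hann : ∀ k : ℕ, ∫⁻ y in S k, g y ∂volume
      ≤ ENNReal.ofReal (Real.sqrt 2 * ρ ^ n * (3/4 : ℝ) ^ k) * V := by
    intro k
    have hbd : ∀ y ∈ S k, g y ≤ ENNReal.ofReal (c ^ (k+1)) := by
      intro y hy
      have h1 : ρ * (2⁻¹:ℝ) ^ (k+1) ≤ ‖y‖ := by
        have := hy.2
        simp only [mem_ball, dist_zero_right, not_lt] at this
        exact this
      have hy0 : 0 < ‖y‖ := lt_of_lt_of_le (by positivity) h1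
      have h2 : ρ / ‖y‖ ≤ (2:ℝ) ^ (k+1) := by
        rw [div_le_iff₀ hy0]
        calc ρ = (ρ * (2⁻¹:ℝ) ^ (k+1)) * (2:ℝ)^(k+1) := by
              rw [mul_assoc, ← mul_pow]; norm_num
          _ ≤ ‖y‖ * (2:ℝ)^(k+1) := by
              apply mul_le_mul_of_nonneg_right h1 (by positivity)
          _ = (2:ℝ)^(k+1) * ‖y‖ := mul_comm _ _

      have h3 : (ρ / ‖y‖) ^ ((1:ℝ)/2) ≤ c ^ (k+1) := by
        have h4 : (ρ / ‖y‖) ^ ((1:ℝ)/2) ≤ ((2:ℝ)^(k+1)) ^ ((1:ℝ)/2) :=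
          Real.rpow_le_rpow (by positivity) h2 (by norm_num)
        have h5 : ((2:ℝ)^(k+1)) ^ ((1:ℝ)/2) = c ^ (k+1) := by
          rw [← Real.sqrt_eq_rpow]
          rw [show (2:ℝ)^(k+1) = (c^(k+1))^2 by rw [← pow_mul, mul_comm (k+1) 2, pow_mul, hc2]]
          exact Real.sqrt_sq (by positivity)
        exact h4.trans (h5 ▸ le_refl _)
      exact ENNReal.ofReal_le_ofReal h3
    calc ∫⁻ y in S k, g y ∂volume
        ≤ ∫⁻ _ in S k, ENNReal.ofReal (c ^ (k+1)) ∂volume :=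
          setLIntegral_mono' (by
            apply MeasurableSet.diff measurableSet_ball measurableSet_ball) hbd
      _ = ENNReal.ofReal (c ^ (k+1)) * volume (S k) := setLIntegral_const _ _
      _ ≤ ENNReal.ofReal (c ^ (k+1)) * volume (ball (0:E) (ρ * (2⁻¹:ℝ) ^ k)) := by
          apply mul_le_mul_right (measure_mono Set.diff_subset)
      _ = ENNReal.ofReal (c ^ (k+1)) * (ENNReal.ofReal ((ρ * (2⁻¹:ℝ) ^ k) ^
            Module.finrank ℝ E) * V) := by
          rw [MeasureTheory.Measure.addHaar_ball (volume : Measure E) (0:E) (by positivity : (0:ℝ) ≤ ρ * (2⁻¹:ℝ)^k)]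
      _ ≤ ENNReal.ofReal (Real.sqrt 2 * ρ ^ n * (3/4:ℝ) ^ k) * V := by
          rw [show Module.finrank ℝ E = n from finrank_euclideanSpace_fin, ← mul_assoc,
            ← ENNReal.ofReal_mul (by positivity)]
          apply mul_le_mul_left
          apply ENNReal.ofReal_le_ofReal
          -- c^(k+1) * (ρ * 2⁻¹^k)^n ≤ √2 * ρ^n * (3/4)^k
          have e1 : c ^ (k+1) * (ρ * (2⁻¹:ℝ)^k)^n = Real.sqrt 2 * ρ^n * (c^k * ((2⁻¹:ℝ)^n)^k) := by
            rw [mul_pow, ← pow_mul, mul_comm k n, pow_mul]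
            ring_nf
            rw [hc]; ring
          rw [e1]
          apply mul_le_mul_of_nonneg_left _ (by positivity)
          have h6 : ((2⁻¹:ℝ)^n)^k ≤ ((2⁻¹:ℝ))^k := by
            apply pow_le_pow_left₀ (by positivity)
            apply pow_le_of_le_one (by norm_num) (by norm_num) (by omega)
          have h7 : c^k * ((2⁻¹:ℝ)^n)^k ≤ c^k * (2⁻¹:ℝ)^k := by
            apply mul_le_mul_of_nonneg_left h6 (by positivity)
          have h8 : c^k * (2⁻¹:ℝ)^k = (c * 2⁻¹)^k := (mul_pow _ _ _).symm
          have h9 : c * 2⁻¹ ≤ 3/4 := by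
            nlinarith [hc2, hc0]
          calc c^k * ((2⁻¹:ℝ)^n)^k ≤ (c * 2⁻¹)^k := by rw [← h8]; exact h7
            _ ≤ (3/4:ℝ)^k := pow_le_pow_left₀ (by positivity) h9 k
  -- sum up
  calc ∫⁻ y in ball (0:E) ρ, g y ∂volume
      ≤ ∫⁻ y in {(0:E)} ∪ ⋃ k, S k, g y ∂volume :=
        lintegral_mono_set (annuli_cover hρ)
    _ ≤ (∫⁻ y in {(0:E)}, g y ∂volume) + ∫⁻ y in ⋃ k, S k, g y ∂volume :=
        lintegral_union_le _ _ _
    _ ≤ 0 + ∑' k, ∫⁻ y in S k, g y ∂volume := by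
        apply add_le_add
        · rw [lintegral_singleton]
          have : g 0 = 0 := by
            simp [hg, Real.zero_rpow (by norm_num : ((1:ℝ)/2) ≠ 0)]
          rw [this, zero_mul]
        · exact lintegral_iUnion_le _ _
    _ ≤ 0 + ∑' k, ENNReal.ofReal (Real.sqrt 2 * ρ ^ n * (3/4 : ℝ) ^ k) * V :=
        add_le_add le_rfl (ENNReal.tsum_le_tsum hann)
    _ ≤ ENNReal.ofReal (6 * ρ ^ n) * V := by
        rw [zero_add]
        have : ∀ k : ℕ, ENNReal.ofReal (Real.sqrt 2 * ρ ^ n * (3/4 : ℝ) ^ k) * V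
            = (ENNReal.ofReal (Real.sqrt 2 * ρ ^ n) * V) * (ENNReal.ofReal (3/4 : ℝ)) ^ k := by
          intro k
          rw [ENNReal.ofReal_mul (by positivity), ← ENNReal.ofReal_pow (by norm_num)]
          ring
        simp_rw [this]
        rw [ENNReal.tsum_mul_left, ENNReal.tsum_geometric]
        have hgeo : (1 - ENNReal.ofReal (3/4 : ℝ))⁻¹ = ENNReal.ofReal (4:ℝ) := by
          rw [show (1:ℝ≥0∞) - ENNReal.ofReal (3/4) = ENNReal.ofReal (1/4 : ℝ) by
            rw [show (1:ℝ≥0∞) = ENNReal.ofReal 1 by simp,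
              ← ENNReal.ofReal_sub _ (by norm_num)]
            norm_num]
          rw [← ENNReal.ofReal_inv_of_pos (by norm_num)]
          norm_num
        rw [hgeo]
        calc ENNReal.ofReal (Real.sqrt 2 * ρ ^ n) * V * ENNReal.ofReal 4
            = ENNReal.ofReal (Real.sqrt 2 * ρ ^ n) * ENNReal.ofReal 4 * V := by ring
          _ = ENNReal.ofReal (Real.sqrt 2 * ρ ^ n * 4) * V := by
              rw [← ENNReal.ofReal_mul (by positivity)]
          _ ≤ ENNReal.ofReal (6 * ρ ^ n) * V := by
              apply mul_le_mul_left
              apply ENNReal.ofReal_le_ofReal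
              nlinarith [Real.sq_sqrt (show (0:ℝ) ≤ 2 by norm_num),
                Real.sqrt_nonneg 2, pow_pos hρ n]

lemma psi_meas {n : ℕ} (ρ : ℝ) :
    Measurable (fun y : EuclideanSpace ℝ (Fin n) => (ρ / ‖y‖) ^ ((1:ℝ)/2)) :=
  (Real.continuous_rpow_const (by norm_num : (0:ℝ) ≤ 1/2)).measurable.comp
    (measurable_const.div measurable_norm)

lemma psi_integrableOn {n : ℕ} (hn : 1 ≤ n) {ρ : ℝ} (hρ : 0 < ρ) :
    IntegrableOn (fun y : EuclideanSpace ℝ (Fin n) => (ρ / ‖y‖) ^ ((1:ℝ)/2))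
      (ball (0 : EuclideanSpace ℝ (Fin n)) ρ) volume := by
  refine ⟨(psi_meas ρ).aestronglyMeasurable, ?_⟩
  rw [hasFiniteIntegral_iff_norm]
  have heq : ∀ y : EuclideanSpace ℝ (Fin n),
      ENNReal.ofReal ‖(ρ / ‖y‖) ^ ((1:ℝ)/2)‖ = ENNReal.ofReal ((ρ / ‖y‖) ^ ((1:ℝ)/2)) := by
    intro y
    rw [Real.norm_of_nonneg (Real.rpow_nonneg (by positivity) _)]
  simp_rw [heq]
  exact lt_of_le_of_lt (lintegral_rpow_ball hn hρ)
    (ENNReal.mul_lt_top ENNReal.ofReal_lt_top measure_ball_lt_top)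

lemma psi_integral_le {n : ℕ} (hn : 1 ≤ n) {ρ : ℝ} (hρ : 0 < ρ) :
    ∫ y in ball (0 : EuclideanSpace ℝ (Fin n)) ρ, (ρ / ‖y‖) ^ ((1:ℝ)/2)
      ≤ 6 * ρ ^ n * (volume (ball (0 : EuclideanSpace ℝ (Fin n)) 1)).toReal := by
  rw [MeasureTheory.integral_eq_lintegral_of_nonneg_ae
    (Filter.Eventually.of_forall fun y => Real.rpow_nonneg (by positivity) _)
    (psi_meas ρ).aestronglyMeasurable]
  calc (∫⁻ y in ball (0 : EuclideanSpace ℝ (Fin n)) ρ,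
        ENNReal.ofReal ((ρ / ‖y‖) ^ ((1:ℝ)/2)) ∂volume).toReal
      ≤ (ENNReal.ofReal (6 * ρ ^ n) * volume (ball (0 : EuclideanSpace ℝ (Fin n)) 1)).toReal := by
        apply ENNReal.toReal_mono
          (ENNReal.mul_ne_top ENNReal.ofReal_ne_top measure_ball_lt_top.ne)
          (lintegral_rpow_ball hn hρ)
    _ = 6 * ρ ^ n * (volume (ball (0 : EuclideanSpace ℝ (Fin n)) 1)).toReal := by
        rw [ENNReal.toReal_mul, ENNReal.toReal_ofReal (by positivity)]


set_option maxHeartbeats 2000000 in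
theorem meanOsc_logloglog (n : ℕ) (hn : 1 ≤ n) :
    ∃ C : ℝ, 0 < C ∧ ∃ r₀ : ℝ, 0 < r₀ ∧ ∀ r : ℝ, 0 < r → r < r₀ →
      meanOsc2 (fun x : EuclideanSpace ℝ (Fin n) => Real.log (Real.log (Real.log (64 / ‖x‖)))) r
        ≤ C / (Real.log (64 / r) * Real.log (Real.log (64 / r))) := by
  haveI : Nonempty (Fin n) := ⟨⟨0, hn⟩⟩
  haveI : Nontrivial (EuclideanSpace ℝ (Fin n)) := inferInstance
  haveI : Nonempty (ball (0 : EuclideanSpace ℝ (Fin n)) 2) :=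
    ⟨⟨0, mem_ball_self (by norm_num)⟩⟩
  set N : ℝ := 96 * 3 ^ (n + 2) with hNdef
  have h3n : (1:ℝ) ≤ 3 ^ (n + 2) := one_le_pow₀ (by norm_num)
  have hN1 : (1:ℝ) ≤ N := by nlinarith
  refine ⟨2 * N, by linarith, 1, one_pos, fun r hr hr1 => ?_⟩
  -- facts about the denominator
  have hr3 : r ≤ 3 := by linarith
  have hLr4 : 3 ≤ Real.log (64 / r) := log_ge_three hr hr3
  have hMr1 : 1 ≤ Real.log (Real.log (64 / r)) := loglog_ge_one hr hr3
  set P : ℝ := Real.log (64 / r) * Real.log (Real.log (64 / r)) with hPdef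
  have hP3 : 3 ≤ P := by nlinarith
  have hP0 : 0 < P := by linarith
  rw [meanOsc2]
  apply ciSup_le
  intro x
  set fl : EuclideanSpace ℝ (Fin n) → ℝ :=
    fun y => Real.log (Real.log (Real.log (64 / ‖y‖))) with hfl
  have hx2 : ‖(x : EuclideanSpace ℝ (Fin n))‖ < 2 := by
    have hh := mem_ball.1 x.2
    rwa [dist_zero_right] at hh
  set B : Set (EuclideanSpace ℝ (Fin n)) := ball (x : EuclideanSpace ℝ (Fin n)) r with hB
  set μr : ℝ := (volume B).toReal with hμrdef
  set v : ℝ := (volume (ball (0 : EuclideanSpace ℝ (Fin n)) 1)).toReal with hv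
  have hv0 : 0 < v :=
    ENNReal.toReal_pos (measure_ball_pos _ _ one_pos).ne' measure_ball_lt_top.ne
  have hμr : μr = r ^ n * v := by
    rw [hμrdef, hB, MeasureTheory.Measure.addHaar_ball volume _ hr.le,
      ENNReal.toReal_mul, ENNReal.toReal_ofReal (by positivity),
      show Module.finrank ℝ (EuclideanSpace ℝ (Fin n)) = n from finrank_euclideanSpace_fin]
  have hμr0 : 0 < μr := by rw [hμr]; positivity
  set ρ : ℝ := ‖(x : EuclideanSpace ℝ (Fin n))‖ + r with hρdef
  have hρ0 : 0 < ρ := by positivity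
  have hρr : r ≤ ρ := by have := norm_nonneg (x : EuclideanSpace ℝ (Fin n)); linarith
  have hρ3 : ρ ≤ 3 := by linarith
  have hL3 : 3 ≤ Real.log (64 / ρ) := log_ge_three hρ0 hρ3
  have hM1 : 1 ≤ Real.log (Real.log (64 / ρ)) := loglog_ge_one hρ0 hρ3
  set LM : ℝ := Real.log (64 / ρ) * Real.log (Real.log (64 / ρ)) with hLM
  have hLM0 : 0 < LM := by nlinarith
  have hscale : r * P ≤ ρ * LM := scale_mono hr hρr hρ3
  set c : ℝ := Real.log (Real.log (Real.log (64 / ρ))) with hc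
  set G : EuclideanSpace ℝ (Fin n) → ℝ :=
    fun y => (ρ / r) * Real.log (ρ / ‖y‖) with hG
  -- ball inclusion
  have hBsub : B ⊆ ball (0 : EuclideanSpace ℝ (Fin n)) ρ := by
    apply ball_subset_ball'
    rw [dist_zero_right]
    linarith
  -- pointwise bounds
  have hpt : ∀ y ∈ B, y ≠ 0 →
      0 ≤ fl y - c ∧ fl y - c ≤ G y / P ∧ 0 ≤ G y ∧
      G y ≤ 2 * (ρ / r) * (ρ / ‖y‖) ^ ((1:ℝ)/2) ∧
      (G y) ^ 2 ≤ 16 * (ρ / r) ^ 2 * (ρ / ‖y‖) ^ ((1:ℝ)/2) := by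
    intro y hyB hy0
    have hy : 0 < ‖y‖ := norm_pos_iff.2 hy0
    have hyρ : ‖y‖ < ρ := by
      have hd : dist y (x : EuclideanSpace ℝ (Fin n)) < r := mem_ball.1 hyB
      have h2 : ‖y‖ - ‖(x : EuclideanSpace ℝ (Fin n))‖ ≤ ‖y - (x : EuclideanSpace ℝ (Fin n))‖ :=
        norm_sub_norm_le _ _
      rw [← dist_eq_norm] at h2
      linarith
    obtain ⟨hlow, hup⟩ := triple_log_osc hy hyρ.le hρ3
    have hlogdiv : Real.log ρ - Real.log ‖y‖ = Real.log (ρ / ‖y‖) :=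
      (Real.log_div hρ0.ne' hy.ne').symm
    have hz1 : 1 ≤ ρ / ‖y‖ := (one_le_div hy).2 hyρ.le
    have hlogpos : 0 ≤ Real.log (ρ / ‖y‖) := Real.log_nonneg hz1
    obtain ⟨hl1, hl2⟩ := log_le_rpow_half hz1
    have hG0 : 0 ≤ G y := by
      rw [hG]
      have : 0 ≤ ρ / r := by positivity
      positivity
    refine ⟨hlow, ?_, hG0, ?_, ?_⟩
    · -- fl y - c ≤ G y / P
      have hstep : fl y - c ≤ Real.log (ρ / ‖y‖) / LM := by
        rw [← hlogdiv]; exact hup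
      refine hstep.trans ?_
      rw [hG, div_le_div_iff₀ hLM0 hP0]
      have hmul : Real.log (ρ / ‖y‖) * (r * P) ≤ Real.log (ρ / ‖y‖) * (ρ * LM) :=
        mul_le_mul_of_nonneg_left hscale hlogpos
      have hrρ : ρ / r * r = ρ := div_mul_cancel₀ _ hr.ne'
      apply le_of_mul_le_mul_right _ hr
      calc Real.log (ρ / ‖y‖) * P * r = Real.log (ρ / ‖y‖) * (r * P) := by ring
        _ ≤ Real.log (ρ / ‖y‖) * (ρ * LM) := hmul
        _ = ρ / r * Real.log (ρ / ‖y‖) * LM * r := by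
            have hh : ρ / r * Real.log (ρ / ‖y‖) * LM * r
                = Real.log (ρ / ‖y‖) * ((ρ / r * r) * LM) := by ring
            rw [hh, hrρ]
    · rw [hG]
      calc ρ / r * Real.log (ρ / ‖y‖) ≤ ρ / r * (2 * (ρ / ‖y‖) ^ ((1:ℝ)/2)) :=
            mul_le_mul_of_nonneg_left hl1 (by positivity)
        _ = 2 * (ρ / r) * (ρ / ‖y‖) ^ ((1:ℝ)/2) := by ring
    · rw [hG, mul_pow]
      calc (ρ / r) ^ 2 * (Real.log (ρ / ‖y‖)) ^ 2
          ≤ (ρ / r) ^ 2 * (16 * (ρ / ‖y‖) ^ ((1:ℝ)/2)) :=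
            mul_le_mul_of_nonneg_left hl2 (by positivity)
        _ = 16 * (ρ / r) ^ 2 * (ρ / ‖y‖) ^ ((1:ℝ)/2) := by ring
  -- a.e. facts
  have hae0 : ∀ᵐ y ∂(volume.restrict B), y ∈ B ∧ y ≠ 0 := by
    refine (ae_restrict_mem measurableSet_ball).and ?_
    have h0 : ∀ᵐ y : EuclideanSpace ℝ (Fin n) ∂volume, y ≠ 0 := by
      rw [ae_iff]
      have : {y : EuclideanSpace ℝ (Fin n) | ¬ y ≠ 0} = {0} := by
        ext y; simp
      rw [this]
      exact measure_singleton 0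
    exact ae_restrict_of_ae h0
  -- measurability
  have hGmeas : Measurable G := by
    rw [hG]
    exact (Real.measurable_log.comp (measurable_const.div measurable_norm)).const_mul _
  have hflmeas : Measurable fl := by
    rw [hfl]
    exact Real.measurable_log.comp (Real.measurable_log.comp
      (Real.measurable_log.comp (measurable_const.div measurable_norm)))
  -- integrability
  have hψB : IntegrableOn (fun y : EuclideanSpace ℝ (Fin n) => (ρ / ‖y‖) ^ ((1:ℝ)/2)) B volume :=
    (psi_integrableOn hn hρ0).mono_set hBsub
  have hGint : IntegrableOn G B volume := by
    apply Integrable.mono' (hψB.const_mul (2 * (ρ / r))) hGmeas.aestronglyMeasurable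
    filter_upwards [hae0] with y hy
    obtain ⟨_, _, h3, h4, _⟩ := hpt y hy.1 hy.2
    rw [Real.norm_of_nonneg h3]
    exact h4.trans_eq (by ring)
  have hG2int : IntegrableOn (fun y => (G y) ^ 2) B volume := by
    apply Integrable.mono' (hψB.const_mul (16 * (ρ / r) ^ 2))
      (hGmeas.pow_const 2).aestronglyMeasurable
    filter_upwards [hae0] with y hy
    obtain ⟨_, _, _, _, h5⟩ := hpt y hy.1 hy.2
    rw [Real.norm_of_nonneg (sq_nonneg _)]
    exact h5.trans_eq (by ring)
  have hconstint : ∀ C : ℝ, IntegrableOn (fun _ => C) B volume := fun C =>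
    integrableOn_const measure_ball_lt_top.ne
  have hflint : IntegrableOn fl B volume := by
    apply Integrable.mono' ((hGint.div_const P).add (hconstint |c|))
      hflmeas.aestronglyMeasurable
    filter_upwards [hae0] with y hy
    obtain ⟨h1, h2, h3, _, _⟩ := hpt y hy.1 hy.2
    simp only [Pi.add_apply]
    rw [Real.norm_eq_abs, abs_le]
    constructor
    · have : 0 ≤ G y / P := by positivity
      have hcc : -|c| ≤ c := neg_abs_le c
      linarith
    · have hcc : c ≤ |c| := le_abs_self c
      linarith
  -- averages
  set a : ℝ := μr⁻¹ * ∫ z in B, fl z with ha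
  set A : ℝ := μr⁻¹ * ∫ y in B, G y with hA
  set A2 : ℝ := μr⁻¹ * ∫ y in B, (G y) ^ 2 with hA2
  have hGae_nonneg : 0 ≤ᵐ[volume.restrict B] G := by
    filter_upwards [hae0] with y hy
    exact (hpt y hy.1 hy.2).2.2.1
  have hG2ae_nonneg : 0 ≤ᵐ[volume.restrict B] fun y => (G y) ^ 2 :=
    Filter.Eventually.of_forall fun y => sq_nonneg _
  have hA0 : 0 ≤ A := by
    rw [hA]
    exact mul_nonneg (by positivity) (integral_nonneg_of_ae hGae_nonneg)
  -- integral bounds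
  have hIG : (∫ y in B, G y) ≤ N * μr ∧ (∫ y in B, (G y) ^ 2) ≤ N * μr := by
    by_cases hxc : ‖(x : EuclideanSpace ℝ (Fin n))‖ ≤ 2 * r
    · -- near case
      have hρ3r : ρ ≤ 3 * r := by rw [hρdef]; linarith
      have hρrle : ρ / r ≤ 3 := (div_le_iff₀ hr).2 (by linarith)
      have hρn : ρ ^ n ≤ 3 ^ n * r ^ n := by
        rw [← mul_pow]
        exact pow_le_pow_left₀ hρ0.le hρ3r n
      have hψle : (∫ y in B, (ρ / ‖y‖) ^ ((1:ℝ)/2)) ≤ 6 * ρ ^ n * v := by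
        calc (∫ y in B, (ρ / ‖y‖) ^ ((1:ℝ)/2))
            ≤ ∫ y in ball (0 : EuclideanSpace ℝ (Fin n)) ρ, (ρ / ‖y‖) ^ ((1:ℝ)/2) := by
              apply setIntegral_mono_set (psi_integrableOn hn hρ0)
                (Filter.Eventually.of_forall fun y => Real.rpow_nonneg (by positivity) _)
                (HasSubset.Subset.eventuallyLE hBsub)
          _ ≤ 6 * ρ ^ n * v := psi_integral_le hn hρ0
      have hψ0 : 0 ≤ ∫ y in B, (ρ / ‖y‖) ^ ((1:ℝ)/2) :=
        integral_nonneg_of_ae (Filter.Eventually.of_forall fun y => Real.rpow_nonneg (by positivity) _)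
      constructor
      · calc (∫ y in B, G y) ≤ ∫ y in B, 2 * (ρ / r) * (ρ / ‖y‖) ^ ((1:ℝ)/2) := by
              apply integral_mono_of_nonneg hGae_nonneg (hψB.const_mul _)
              filter_upwards [hae0] with y hy
              exact (hpt y hy.1 hy.2).2.2.2.1
          _ = 2 * (ρ / r) * ∫ y in B, (ρ / ‖y‖) ^ ((1:ℝ)/2) := integral_const_mul _ _
          _ ≤ N * μr := by
              rw [hμr, hNdef]
              have hrn : (0:ℝ) < r ^ n := by positivity
              have h9 : (3:ℝ) ^ (n + 2) = 9 * 3 ^ n := by ring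
              have h3p : (0:ℝ) < 3 ^ n := by positivity
              have hρr0 : 0 ≤ ρ / r := by positivity
              have s1 : 2 * (ρ / r) * ∫ y in B, (ρ / ‖y‖) ^ ((1:ℝ)/2)
                  ≤ 6 * ∫ y in B, (ρ / ‖y‖) ^ ((1:ℝ)/2) := by
                apply mul_le_mul_of_nonneg_right _ hψ0
                linarith
              have s2 : 6 * ∫ y in B, (ρ / ‖y‖) ^ ((1:ℝ)/2) ≤ 6 * (6 * ρ ^ n * v) := by
                linarith
              have s3 : (6:ℝ) * (6 * ρ ^ n * v) ≤ 36 * (3 ^ n * r ^ n) * v := by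
                nlinarith [hρn, hv0]
              have s4 : (36:ℝ) * (3 ^ n * r ^ n) * v ≤ 96 * 3 ^ (n + 2) * (r ^ n * v) := by
                rw [h9]
                nlinarith [hrn, hv0, h3p]
              linarith
      · calc (∫ y in B, (G y) ^ 2) ≤ ∫ y in B, 16 * (ρ / r) ^ 2 * (ρ / ‖y‖) ^ ((1:ℝ)/2) := by
              apply integral_mono_of_nonneg hG2ae_nonneg (hψB.const_mul _)
              filter_upwards [hae0] with y hy
              exact (hpt y hy.1 hy.2).2.2.2.2
          _ = 16 * (ρ / r) ^ 2 * ∫ y in B, (ρ / ‖y‖) ^ ((1:ℝ)/2) := integral_const_mul _ _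
          _ ≤ N * μr := by
              rw [hμr, hNdef]
              have hrn : (0:ℝ) < r ^ n := by positivity
              have h9 : (3:ℝ) ^ (n + 2) = 9 * 3 ^ n := by ring
              have h3p : (0:ℝ) < 3 ^ n := by positivity
              have hρr0 : 0 ≤ ρ / r := by positivity
              have hsq : (ρ / r) ^ 2 ≤ 9 := by nlinarith
              have s1 : 16 * (ρ / r) ^ 2 * ∫ y in B, (ρ / ‖y‖) ^ ((1:ℝ)/2)
                  ≤ 144 * ∫ y in B, (ρ / ‖y‖) ^ ((1:ℝ)/2) := by
                apply mul_le_mul_of_nonneg_right _ hψ0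
                linarith
              have s2 : (144:ℝ) * ∫ y in B, (ρ / ‖y‖) ^ ((1:ℝ)/2) ≤ 144 * (6 * ρ ^ n * v) := by
                linarith
              have s3 : (144:ℝ) * (6 * ρ ^ n * v) ≤ 864 * (3 ^ n * r ^ n) * v := by
                nlinarith [hρn, hv0]
              have s4 : (864:ℝ) * (3 ^ n * r ^ n) * v ≤ 96 * 3 ^ (n + 2) * (r ^ n * v) := by
                rw [h9]
                nlinarith [hrn, hv0, h3p]
              linarith
    · -- far case
      push_neg at hxc
      have hpt6 : ∀ y ∈ B, y ≠ 0 → G y ≤ 6 := by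
        intro y hyB hy0
        have hy : 0 < ‖y‖ := norm_pos_iff.2 hy0
        have hd : dist y (x : EuclideanSpace ℝ (Fin n)) < r := mem_ball.1 hyB
        have h2 : ‖(x : EuclideanSpace ℝ (Fin n))‖ - ‖y‖ ≤ ‖(x : EuclideanSpace ℝ (Fin n)) - y‖ :=
          norm_sub_norm_le _ _
        rw [← dist_eq_norm, dist_comm] at h2
        have hxr0 : 0 < ‖(x : EuclideanSpace ℝ (Fin n))‖ - r := by linarith
        have hyl : ‖(x : EuclideanSpace ℝ (Fin n))‖ - r ≤ ‖y‖ := by linarith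
        have hlog1 : Real.log (ρ / ‖y‖) ≤ Real.log (ρ / (‖(x : EuclideanSpace ℝ (Fin n))‖ - r)) := by
          apply Real.log_le_log (by positivity)
          apply div_le_div_of_nonneg_left hρ0.le hxr0 hyl
        have hlog2 : Real.log (ρ / (‖(x : EuclideanSpace ℝ (Fin n))‖ - r))
            ≤ ρ / (‖(x : EuclideanSpace ℝ (Fin n))‖ - r) - 1 :=
          Real.log_le_sub_one_of_pos (by positivity)
        rw [hG]
        have hfrac : ρ / (‖(x : EuclideanSpace ℝ (Fin n))‖ - r) - 1
            = 2 * r / (‖(x : EuclideanSpace ℝ (Fin n))‖ - r) := by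
          rw [hρdef]; field_simp; ring
        have hG6 : ρ / r * (2 * r / (‖(x : EuclideanSpace ℝ (Fin n))‖ - r)) ≤ 6 := by
          rw [div_mul_div_comm, div_le_iff₀ (by positivity)]
          rw [hρdef]
          nlinarith [hxc, hr]
        calc ρ / r * Real.log (ρ / ‖y‖)
            ≤ ρ / r * (2 * r / (‖(x : EuclideanSpace ℝ (Fin n))‖ - r)) := by
              apply mul_le_mul_of_nonneg_left _ (by positivity)
              rw [← hfrac]
              exact hlog1.trans hlog2
          _ ≤ 6 := hG6
      have h6N : (6:ℝ) ≤ N ∧ (36:ℝ) ≤ N := by constructor <;> nlinarith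
      constructor
      · calc (∫ y in B, G y) ≤ ∫ _ in B, (6:ℝ) := by
              apply integral_mono_of_nonneg hGae_nonneg (hconstint 6)
              filter_upwards [hae0] with y hy
              exact hpt6 y hy.1 hy.2
          _ = μr * 6 := by rw [setIntegral_const, smul_eq_mul]; rfl
          _ ≤ N * μr := by nlinarith [h6N.1, hμr0]
      · calc (∫ y in B, (G y) ^ 2) ≤ ∫ _ in B, (36:ℝ) := by
              apply integral_mono_of_nonneg hG2ae_nonneg (hconstint 36)
              filter_upwards [hae0] with y hy
              have h6 := hpt6 y hy.1 hy.2
              have h0 := (hpt y hy.1 hy.2).2.2.1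
              nlinarith
          _ = μr * 36 := by rw [setIntegral_const, smul_eq_mul]; rfl
          _ ≤ N * μr := by nlinarith [h6N.2, hμr0]
  have hAN : A ≤ N := by
    rw [hA]
    calc μr⁻¹ * ∫ y in B, G y ≤ μr⁻¹ * (N * μr) :=
          mul_le_mul_of_nonneg_left hIG.1 (by positivity)
      _ = N := by field_simp
  have hA2N : A2 ≤ N := by
    rw [hA2]
    calc μr⁻¹ * ∫ y in B, (G y) ^ 2 ≤ μr⁻¹ * (N * μr) :=
          mul_le_mul_of_nonneg_left hIG.2 (by positivity)
      _ = N := by field_simp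
  -- average distance to c
  have hac : |a - c| ≤ A / P := by
    have hsub : ∫ y in B, (fl y - c) = (∫ y in B, fl y) - μr * c := by
      rw [integral_sub hflint (hconstint c), setIntegral_const, smul_eq_mul]; rfl
    have hac1 : a - c = μr⁻¹ * ∫ y in B, (fl y - c) := by
      rw [hsub, ha, mul_sub, ← mul_assoc, inv_mul_cancel₀ hμr0.ne', one_mul]
    have habs : |∫ y in B, (fl y - c)| ≤ ∫ y in B, |fl y - c| := by
      have hnorm := norm_integral_le_integral_norm (μ := volume.restrict B)
        (f := fun y => fl y - c)
      simpa [Real.norm_eq_abs] using hnorm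
    have hint2 : (∫ y in B, |fl y - c|) ≤ ∫ y in B, G y / P := by
      apply integral_mono_of_nonneg (Filter.Eventually.of_forall fun y => abs_nonneg _)
        (hGint.div_const P)
      filter_upwards [hae0] with y hy
      obtain ⟨h1, h2, _, _, _⟩ := hpt y hy.1 hy.2
      rw [abs_of_nonneg h1]
      exact h2
    rw [hac1, abs_mul, abs_of_nonneg (by positivity : (0:ℝ) ≤ μr⁻¹)]
    calc μr⁻¹ * |∫ y in B, (fl y - c)| ≤ μr⁻¹ * ∫ y in B, G y / P := by
          apply mul_le_mul_of_nonneg_left (habs.trans hint2) (by positivity)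
      _ = A / P := by rw [integral_div, hA]; ring
  -- final quadratic bound
  have hfinal : μr⁻¹ * (∫ y in B, |fl y - a| ^ (2:ℝ)) ≤ (2 * N / P) ^ 2 := by
    have hmajint : IntegrableOn (fun y => (G y / P + A / P) ^ 2) B volume := by
      have : (fun y => (G y / P + A / P) ^ 2)
          = fun y => (1 / P ^ 2) * (G y) ^ 2 + ((2 * A / P ^ 2) * G y + (A / P) ^ 2) := by
        funext y; field_simp; ring
      rw [this]
      exact (hG2int.const_mul _).add ((hGint.const_mul _).add (hconstint _))
    have hptw : ∀ᵐ y ∂(volume.restrict B), |fl y - a| ^ (2:ℝ) ≤ (G y / P + A / P) ^ 2 := by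
      filter_upwards [hae0] with y hy
      obtain ⟨h1, h2, h3, _, _⟩ := hpt y hy.1 hy.2
      have habs : |fl y - a| ≤ G y / P + A / P := by
        have hca : |c - a| ≤ A / P := by rw [abs_sub_comm]; exact hac
        calc |fl y - a| = |(fl y - c) + (c - a)| := by ring_nf
          _ ≤ |fl y - c| + |c - a| := abs_add_le _ _
          _ ≤ G y / P + A / P := by
              rw [abs_of_nonneg h1]
              exact add_le_add h2 hca
      have hrpow : |fl y - a| ^ (2:ℝ) = |fl y - a| ^ (2:ℕ) := by
        rw [← Real.rpow_natCast]
        norm_num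
      rw [hrpow]
      exact pow_le_pow_left₀ (abs_nonneg _) habs 2
    have hint : (∫ y in B, |fl y - a| ^ (2:ℝ)) ≤ ∫ y in B, (G y / P + A / P) ^ 2 := by
      apply integral_mono_of_nonneg
        (Filter.Eventually.of_forall fun y => Real.rpow_nonneg (abs_nonneg _) _)
        hmajint hptw
    have hexp : (∫ y in B, (G y / P + A / P) ^ 2)
        = (1 / P ^ 2) * (∫ y in B, (G y) ^ 2) + ((2 * A / P ^ 2) * (∫ y in B, G y)
          + (A / P) ^ 2 * μr) := by
      have heq : (fun y => (G y / P + A / P) ^ 2)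
          = fun y => (1 / P ^ 2) * (G y) ^ 2 + ((2 * A / P ^ 2) * G y + (A / P) ^ 2) := by
        funext y; field_simp; ring
      have i1 : IntegrableOn (fun y => (2 * A / P ^ 2) * G y + (A / P) ^ 2) B volume :=
        (hGint.const_mul _).add (hconstint _)
      have i2 : IntegrableOn (fun y => (1 / P ^ 2) * (G y) ^ 2) B volume :=
        hG2int.const_mul _
      rw [heq, integral_add i2 i1,
        integral_add (hGint.const_mul (2 * A / P ^ 2)) (hconstint ((A / P) ^ 2)),
        integral_const_mul, integral_const_mul, setIntegral_const, smul_eq_mul]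
      rw [show volume.real B = μr from rfl]
      ring
    calc μr⁻¹ * (∫ y in B, |fl y - a| ^ (2:ℝ))
        ≤ μr⁻¹ * ((1 / P ^ 2) * (∫ y in B, (G y) ^ 2) + ((2 * A / P ^ 2) * (∫ y in B, G y)
            + (A / P) ^ 2 * μr)) := by
          apply mul_le_mul_of_nonneg_left (hint.trans_eq hexp) (by positivity)
      _ = (1 / P ^ 2) * A2 + ((2 / P ^ 2) * A ^ 2 + (A / P) ^ 2) := by
          rw [hA2, hA]
          field_simp
      _ = (A2 + 3 * A ^ 2) / P ^ 2 := by field_simp; ring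
      _ ≤ (4 * N ^ 2) / P ^ 2 := by
          have hP2 : (0:ℝ) < P ^ 2 := by positivity
          have hle : A2 + 3 * A ^ 2 ≤ 4 * N ^ 2 := by nlinarith
          exact (div_le_div_iff_of_pos_right hP2).2 hle
      _ = (2 * N / P) ^ 2 := by field_simp; ring
  -- conclude via rpow
  have hX0 : 0 ≤ μr⁻¹ * ∫ y in B, |fl y - a| ^ (2:ℝ) := by
    apply mul_nonneg (by positivity)
    exact integral_nonneg_of_ae
      (Filter.Eventually.of_forall fun y => Real.rpow_nonneg (abs_nonneg _) _)
  have hRHS0 : 0 ≤ 2 * N / P := by positivity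
  calc (μr⁻¹ * ∫ y in B, |fl y - a| ^ (2:ℝ)) ^ ((1:ℝ)/2)
      ≤ ((2 * N / P) ^ 2) ^ ((1:ℝ)/2) := Real.rpow_le_rpow hX0 hfinal (by norm_num)
    _ = 2 * N / P := by
        rw [← Real.rpow_natCast (2 * N / P) 2, ← Real.rpow_mul hRHS0]
        norm_num
end

section
/- Let n ≥ 2 and define on B₄ \ {0} ⊂ ℝⁿ: a(r) = −(1 + n ln(64/r)) / ( (n−1)(ln(64/r))² ln ln(64/r) ) and v(r) = ln ln(64/r), and set u(x) = x¹ v(|x|). Then v''(r) + ((n+1)/r) v'(r) − ((n−1)/r²) a(r) v(r) = 0 for all r ∈ (0, 4], hence u satisfies ∂_α(A^{αβ} ∂_β u) = 0 on B₄ \ {0} with A^{αβ}(x) = δ^{αβ} + a(|x|)(δ^{αβ} − x^α x^β/|x|²). -/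
open Real MeasureTheory Metric

noncomputable section OdePde
namespace OdePde

def L (r : ℝ) : ℝ := Real.log 64 - Real.log r
def V (r : ℝ) : ℝ := Real.log (L r)
def V1 (r : ℝ) : ℝ := -(1 / (r * L r))
def V2 (r : ℝ) : ℝ := (L r - 1) / (r ^ 2 * (L r) ^ 2)
def H (n : ℕ) (r : ℝ) : ℝ := -(1 + n * L r) / ((n - 1) * (L r) ^ 2)
def H1 (n : ℕ) (r : ℝ) : ℝ := -((n : ℝ) * L r + 2) / ((n - 1) * (L r) ^ 3 * r)

theorem L_gt_one {r : ℝ} (hr : 0 < r) (hr16 : r < 16) : 1 < L r := by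
  have h4 : (1:ℝ) < Real.log 4 := by
    rw [Real.lt_log_iff_exp_lt (by norm_num)]
    calc Real.exp 1 < 2.7182818286 := Real.exp_one_lt_d9
      _ < 4 := by norm_num
  have : Real.log 4 ≤ L r := by
    unfold L
    have h64 : (64:ℝ) = 16 * 4 := by norm_num
    have := Real.log_lt_log hr hr16
    have h2 : Real.log 64 = Real.log 16 + Real.log 4 := by
      rw [h64, Real.log_mul (by norm_num) (by norm_num)]
    linarith
  linarith

theorem hasDerivAt_L {r : ℝ} (hr : 0 < r) : HasDerivAt L (-r⁻¹) r := by
  exact (Real.hasDerivAt_log hr.ne').const_sub (Real.log 64)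

theorem hasDerivAt_V {r : ℝ} (hr : 0 < r) (hL : L r ≠ 0) : HasDerivAt V (V1 r) r := by
  have := (Real.hasDerivAt_log hL).comp r (hasDerivAt_L hr)
  refine this.congr_deriv ?_
  unfold V1
  field_simp

theorem hasDerivAt_V1 {r : ℝ} (hr : 0 < r) (hL : L r ≠ 0) : HasDerivAt V1 (V2 r) r := by
  have hmul : HasDerivAt (fun s => s * L s) (L r - 1) r := by
    have := (hasDerivAt_id r).mul (hasDerivAt_L hr)
    refine this.congr_deriv ?_
    simp only [id]
    rw [mul_neg, mul_inv_cancel₀ hr.ne']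
    ring
  have h0 : r * L r ≠ 0 := mul_ne_zero hr.ne' hL
  have := (hmul.inv h0).neg
  have hf : V1 = -(fun s => s * L s)⁻¹ := by funext s; simp [V1, one_div]
  rw [hf]
  refine this.congr_deriv ?_
  symm; unfold V2; rw [mul_pow, neg_div, neg_neg]


theorem hasDerivAt_H {n : ℕ} {r : ℝ} (hr : 0 < r) (hL : L r ≠ 0) (hn : (n:ℝ) - 1 ≠ 0) :
    HasDerivAt (H n) (H1 n r) r := by
  have hnum : HasDerivAt (fun s => -(1 + (n:ℝ) * L s)) ((n:ℝ) * r⁻¹) r := by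
    exact (((hasDerivAt_L hr).const_mul (n:ℝ)).const_add 1).neg.congr_deriv (by ring)
  have hden : HasDerivAt (fun s => ((n:ℝ) - 1) * (L s) ^ 2)
      (((n:ℝ) - 1) * (2 * L r * (-r⁻¹))) r := by
    simpa using ((hasDerivAt_L hr).pow 2).const_mul ((n:ℝ) - 1)
  have hden0 : ((n:ℝ) - 1) * (L r) ^ 2 ≠ 0 := by
    exact mul_ne_zero hn (pow_ne_zero 2 hL)
  have := hnum.div hden hden0
  refine this.congr_deriv ?_
  unfold H1
  field_simp
  ring


def P (n : ℕ) (r : ℝ) : ℝ := V r + H n r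
def Q (n : ℕ) (r : ℝ) : ℝ := V1 r / r - H n r / r ^ 2
def P1 (n : ℕ) (r : ℝ) : ℝ := V1 r + H1 n r
def Q1 (n : ℕ) (r : ℝ) : ℝ :=
  V2 r / r - V1 r / r ^ 2 - H1 n r / r ^ 2 + 2 * H n r / r ^ 3

theorem hasDerivAt_P {n : ℕ} {r : ℝ} (hr : 0 < r) (hL : L r ≠ 0) (hn : (n:ℝ) - 1 ≠ 0) :
    HasDerivAt (P n) (P1 n r) r :=
  (hasDerivAt_V hr hL).add (hasDerivAt_H hr hL hn)

theorem hasDerivAt_Q {n : ℕ} {r : ℝ} (hr : 0 < r) (hL : L r ≠ 0) (hn : (n:ℝ) - 1 ≠ 0) :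
    HasDerivAt (Q n) (Q1 n r) r := by
  have h1 := (hasDerivAt_V1 hr hL).div (hasDerivAt_id r) hr.ne'
  have h2 := (hasDerivAt_H hr hL hn).div (hasDerivAt_pow 2 r) (pow_ne_zero 2 hr.ne')
  have := h1.sub h2
  refine this.congr_deriv ?_
  simp only [id]
  unfold Q1
  field_simp
  ring

theorem log_64_div {r : ℝ} (hr : 0 < r) : Real.log (64 / r) = L r := by
  rw [Real.log_div (by norm_num) hr.ne']; rfl

theorem key_identity {n : ℕ} {r : ℝ} (hr : 0 < r) (hL : L r ≠ 0) (hn : (n:ℝ) - 1 ≠ 0) :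
    P1 n r / r + ((n:ℝ) + 1) * Q n r + r * Q1 n r = 0 := by
  unfold P1 Q Q1 V1 V2 H H1
  field_simp
  ring

theorem ode_identity {n : ℕ} {r : ℝ} (hr : 0 < r) (hL : L r ≠ 0) (hn : (n:ℝ) - 1 ≠ 0) :
    V2 r + ((n:ℝ) + 1) / r * V1 r - ((n:ℝ) - 1) / r ^ 2 * H n r = 0 := by
  unfold V1 V2 H
  field_simp
  ring


theorem hasFDerivAt_norm {m : ℕ} {x : EuclideanSpace ℝ (Fin m)} (hx : x ≠ 0) :
    HasFDerivAt (fun y : EuclideanSpace ℝ (Fin m) => ‖y‖) (‖x‖⁻¹ • (innerSL ℝ x)) x := by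
  have hinner : HasFDerivAt (fun y : EuclideanSpace ℝ (Fin m) => (inner ℝ y y : ℝ))
      ((fderivInnerCLM ℝ (x, x)).comp
        ((ContinuousLinearMap.id ℝ (EuclideanSpace ℝ (Fin m))).prod
          (ContinuousLinearMap.id ℝ (EuclideanSpace ℝ (Fin m))))) x :=
    (hasFDerivAt_id x).inner ℝ (hasFDerivAt_id x)
  have hsq : (inner ℝ x x : ℝ) ≠ 0 := inner_self_ne_zero.mpr hx
  have hsqrt := HasDerivAt.comp_hasFDerivAt
      (f := fun y : EuclideanSpace ℝ (Fin m) => (inner ℝ y y : ℝ)) x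
      (Real.hasDerivAt_sqrt hsq) hinner
  have heq : (fun y : EuclideanSpace ℝ (Fin m) => Real.sqrt (inner ℝ y y : ℝ))
      = fun y : EuclideanSpace ℝ (Fin m) => ‖y‖ := by
    funext y
    rw [real_inner_self_eq_norm_mul_norm, Real.sqrt_mul_self (norm_nonneg y)]
  simp only [Function.comp_def] at hsqrt
  rw [heq] at hsqrt
  refine hsqrt.congr_fderiv ?_
  ext w
  have hnx : Real.sqrt (inner ℝ x x : ℝ) = ‖x‖ := by
    rw [real_inner_self_eq_norm_mul_norm, Real.sqrt_mul_self (norm_nonneg x)]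
  simp only [ContinuousLinearMap.smul_apply, ContinuousLinearMap.coe_comp', Function.comp_apply,
    ContinuousLinearMap.prod_apply, ContinuousLinearMap.coe_id', id_eq, fderivInnerCLM_apply,
    innerSL_apply_apply, smul_eq_mul]
  rw [hnx, real_inner_comm w x]
  ring


theorem fderiv_u_apply {m : ℕ} (i0 : Fin m) {y : EuclideanSpace ℝ (Fin m)} (hy : y ≠ 0)
    (h16 : ‖y‖ < 16) (β : Fin m) :
    fderiv ℝ (fun z : EuclideanSpace ℝ (Fin m) => z i0 * Real.log (Real.log (64 / ‖z‖))) y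
        (EuclideanSpace.single β 1)
      = V ‖y‖ * (if i0 = β then 1 else 0) + y i0 * V1 ‖y‖ * ‖y‖⁻¹ * y β := by
  have hr : (0:ℝ) < ‖y‖ := norm_pos_iff.mpr hy
  have hL : L ‖y‖ ≠ 0 := by
    have := L_gt_one hr h16; linarith
  have h2 := (hasDerivAt_V hr hL).comp_hasFDerivAt y (hasFDerivAt_norm hy)
  have h1pre := (EuclideanSpace.proj (𝕜 := ℝ) (ι := Fin m) i0).hasFDerivAt (x := y)
  have h1 : HasFDerivAt (fun z : EuclideanSpace ℝ (Fin m) => z i0)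
      ((EuclideanSpace.proj i0 : EuclideanSpace ℝ (Fin m) →L[ℝ] ℝ)) y := h1pre
  have hmul := h1.mul h2
  simp only [Function.comp_def, Pi.mul_def] at hmul
  have hev : (fun z : EuclideanSpace ℝ (Fin m) => z i0 * Real.log (Real.log (64 / ‖z‖)))
      =ᶠ[nhds y] (fun z : EuclideanSpace ℝ (Fin m) => z i0 * V ‖z‖) := by
    filter_upwards [IsOpen.mem_nhds isOpen_compl_singleton hy] with z hz
    have hz0 : (0:ℝ) < ‖z‖ := norm_pos_iff.mpr hz
    rw [log_64_div hz0]
    rfl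
  rw [hev.fderiv_eq, hmul.fderiv]
  simp [EuclideanSpace.single_apply, EuclideanSpace.inner_single_right]
  ring


theorem sum_sq {m : ℕ} (y : EuclideanSpace ℝ (Fin m)) : ∑ i : Fin m, y i * y i = ‖y‖ ^ 2 := by
  rw [EuclideanSpace.norm_eq, Real.sq_sqrt (by positivity)]
  simp [sq]

theorem flux_eq {n : ℕ} (hn : (n:ℝ) - 1 ≠ 0) (i0 α : Fin n)
    {y : EuclideanSpace ℝ (Fin n)} (hy : y ≠ 0) (h16 : ‖y‖ < 16) :
    ∑ β : Fin n,
      ((if α = β then (1:ℝ) else 0) +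
        (-(1 + (n : ℝ) * Real.log (64 / ‖y‖)) /
          (((n : ℝ) - 1) * (Real.log (64 / ‖y‖)) ^ 2 * Real.log (Real.log (64 / ‖y‖)))) *
        ((if α = β then (1:ℝ) else 0) - y α * y β / ‖y‖ ^ 2)) *
      fderiv ℝ (fun z : EuclideanSpace ℝ (Fin n) => z i0 * Real.log (Real.log (64 / ‖z‖))) y
        (EuclideanSpace.single β 1)
    = (if α = i0 then (1:ℝ) else 0) * P n ‖y‖ + y i0 * y α * Q n ‖y‖ := by
  have hr : (0:ℝ) < ‖y‖ := norm_pos_iff.mpr hy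
  have hL1 : 1 < L ‖y‖ := L_gt_one hr h16
  have hL : L ‖y‖ ≠ 0 := by linarith
  have hlogL : Real.log (L ‖y‖) ≠ 0 := (Real.log_pos hL1).ne'
  set r := ‖y‖ with hrdef
  obtain ⟨aval, havaldef⟩ : ∃ a0 : ℝ, a0 = -(1 + (n : ℝ) * Real.log (64 / r)) /
      (((n : ℝ) - 1) * (Real.log (64 / r)) ^ 2 * Real.log (Real.log (64 / r))) := ⟨_, rfl⟩
  rw [show (fun β : Fin n => ((if α = β then (1:ℝ) else 0) +
        (-(1 + (n : ℝ) * Real.log (64 / r)) /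
          (((n : ℝ) - 1) * (Real.log (64 / r)) ^ 2 * Real.log (Real.log (64 / r)))) *
        ((if α = β then (1:ℝ) else 0) - y α * y β / r ^ 2)) *
      fderiv ℝ (fun z : EuclideanSpace ℝ (Fin n) => z i0 * Real.log (Real.log (64 / ‖z‖))) y
        (EuclideanSpace.single β 1))
    = (fun β : Fin n => ((if α = β then (1:ℝ) else 0) +
        aval * ((if α = β then (1:ℝ) else 0) - y α * y β / r ^ 2)) *
      fderiv ℝ (fun z : EuclideanSpace ℝ (Fin n) => z i0 * Real.log (Real.log (64 / ‖z‖))) y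
        (EuclideanSpace.single β 1)) from by rw [havaldef]]
  have hav : aval * V r = H n r := by
    rw [havaldef, log_64_div hr]
    show _ * V r = _
    unfold V H
    field_simp
  obtain ⟨c, hcdef⟩ : ∃ c0 : ℝ, c0 = y i0 * V1 r / r := ⟨_, rfl⟩
  have hF : ∀ β : Fin n,
      fderiv ℝ (fun z : EuclideanSpace ℝ (Fin n) => z i0 * Real.log (Real.log (64 / ‖z‖))) y
        (EuclideanSpace.single β 1) = V r * (if i0 = β then 1 else 0) + c * y β := by
    intro β
    rw [fderiv_u_apply i0 hy h16 β, hcdef]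
    ring
  have hstep : ∀ β : Fin n,
      ((if α = β then (1:ℝ) else 0) + aval * ((if α = β then (1:ℝ) else 0) - y α * y β / r ^ 2)) *
        (V r * (if i0 = β then 1 else 0) + c * y β)
      = (1 + aval) * (if α = β then V r * (if i0 = β then 1 else 0) + c * y β else 0)
        + (-aval * y α / r ^ 2) * (y β * (V r * (if i0 = β then 1 else 0) + c * y β)) := by
    intro β
    by_cases h : α = β <;> simp [h] <;> ring
  calc ∑ β : Fin n, ((if α = β then (1:ℝ) else 0) + aval *
          ((if α = β then (1:ℝ) else 0) - y α * y β / r ^ 2)) *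
        fderiv ℝ (fun z : EuclideanSpace ℝ (Fin n) => z i0 * Real.log (Real.log (64 / ‖z‖))) y
          (EuclideanSpace.single β 1)
      = ∑ β : Fin n, ((1 + aval) * (if α = β then V r * (if i0 = β then 1 else 0) + c * y β else 0)
        + (-aval * y α / r ^ 2) * (y β * (V r * (if i0 = β then 1 else 0) + c * y β))) := by
        refine Finset.sum_congr rfl fun β _ => ?_
        rw [hF β, hstep β]
    _ = (1 + aval) * (V r * (if i0 = α then 1 else 0) + c * y α)
        + (-aval * y α / r ^ 2) * (V r * y i0 + c * r ^ 2) := by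
        rw [Finset.sum_add_distrib, ← Finset.mul_sum, ← Finset.mul_sum,
          Finset.sum_ite_eq, if_pos (Finset.mem_univ α)]
        congr 1
        congr 1
        have : ∀ β : Fin n, y β * (V r * (if i0 = β then 1 else 0) + c * y β)
            = (if i0 = β then V r * y β else 0) + c * (y β * y β) := by
          intro β
          by_cases h : i0 = β <;> simp [h] <;> ring
        rw [Finset.sum_congr rfl fun β _ => this β, Finset.sum_add_distrib,
          Finset.sum_ite_eq, if_pos (Finset.mem_univ i0), ← Finset.mul_sum, sum_sq]
    _ = (if α = i0 then (1:ℝ) else 0) * P n r + y i0 * y α * Q n r := by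
        unfold P Q
        rw [← hav, hcdef]
        rcases eq_or_ne α i0 with h | h
        · simp only [h, if_pos rfl]
          have h2 : (i0 = i0) = True := by simp
          simp only [h2, if_true]
          field_simp
          ring
        · simp only [if_neg h, if_neg (Ne.symm h)]
          field_simp
          ring


theorem fderiv_Phi_apply {n : ℕ} (hn : (n:ℝ) - 1 ≠ 0) (i0 α : Fin n)
    {x : EuclideanSpace ℝ (Fin n)} (hx : x ≠ 0) (h16 : ‖x‖ < 16) :
    fderiv ℝ (fun y : EuclideanSpace ℝ (Fin n) =>
        (if α = i0 then (1:ℝ) else 0) * P n ‖y‖ + y i0 * y α * Q n ‖y‖) x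
      (EuclideanSpace.single α 1)
    = (if α = i0 then (1:ℝ) else 0) * (P1 n ‖x‖ * (‖x‖⁻¹ * x α))
      + ((if i0 = α then (1:ℝ) else 0) * x α + x i0) * Q n ‖x‖
      + x i0 * x α * (Q1 n ‖x‖ * (‖x‖⁻¹ * x α)) := by
  have hr : (0:ℝ) < ‖x‖ := norm_pos_iff.mpr hx
  have hL : L ‖x‖ ≠ 0 := by have := L_gt_one hr h16; linarith
  have hP := (hasDerivAt_P hr hL hn).comp_hasFDerivAt x (hasFDerivAt_norm hx)
  have hQ := (hasDerivAt_Q hr hL hn).comp_hasFDerivAt x (hasFDerivAt_norm hx)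
  simp only [Function.comp_def] at hP hQ
  have h1pre := (EuclideanSpace.proj (𝕜 := ℝ) (ι := Fin n) i0).hasFDerivAt (x := x)
  have h1 : HasFDerivAt (fun z : EuclideanSpace ℝ (Fin n) => z i0)
      ((EuclideanSpace.proj i0 : EuclideanSpace ℝ (Fin n) →L[ℝ] ℝ)) x := h1pre
  have h2pre := (EuclideanSpace.proj (𝕜 := ℝ) (ι := Fin n) α).hasFDerivAt (x := x)
  have h2 : HasFDerivAt (fun z : EuclideanSpace ℝ (Fin n) => z α)
      ((EuclideanSpace.proj α : EuclideanSpace ℝ (Fin n) →L[ℝ] ℝ)) x := h2pre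
  have hprod := (h1.mul h2).mul hQ
  have hconst := hP.const_mul (if α = i0 then (1:ℝ) else 0)
  have htot := hconst.add hprod
  simp only [Pi.add_def, Pi.mul_def] at htot
  rw [htot.fderiv]
  rcases eq_or_ne α i0 with hc | hc
  · subst hc
    simp [EuclideanSpace.single_apply, EuclideanSpace.inner_single_right]
    try ring
  · simp [hc, Ne.symm hc, EuclideanSpace.single_apply, EuclideanSpace.inner_single_right]
    try ring

theorem final_sum {n : ℕ} (hn : (n:ℝ) - 1 ≠ 0) (i0 : Fin n)
    {x : EuclideanSpace ℝ (Fin n)} (hx : x ≠ 0) (h16 : ‖x‖ < 16) :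
    ∑ α : Fin n, ((if α = i0 then (1:ℝ) else 0) * (P1 n ‖x‖ * (‖x‖⁻¹ * x α))
      + ((if i0 = α then (1:ℝ) else 0) * x α + x i0) * Q n ‖x‖
      + x i0 * x α * (Q1 n ‖x‖ * (‖x‖⁻¹ * x α))) = 0 := by
  have hr : (0:ℝ) < ‖x‖ := norm_pos_iff.mpr hx
  have hL : L ‖x‖ ≠ 0 := by have := L_gt_one hr h16; linarith
  set r := ‖x‖ with hrdef
  have hterm : ∀ α : Fin n,
      (if α = i0 then (1:ℝ) else 0) * (P1 n r * (r⁻¹ * x α))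
        + ((if i0 = α then (1:ℝ) else 0) * x α + x i0) * Q n r
        + x i0 * x α * (Q1 n r * (r⁻¹ * x α))
      = ((if α = i0 then P1 n r * (r⁻¹ * x α) else 0)
          + (if α = i0 then x α * Q n r else 0) + x i0 * Q n r)
        + (x i0 * Q1 n r * r⁻¹) * (x α * x α) := by
    intro α
    by_cases h : α = i0
    · simp [h]; ring
    · simp [h, Ne.symm h]; ring
  rw [Finset.sum_congr rfl fun α _ => hterm α]
  rw [Finset.sum_add_distrib, Finset.sum_add_distrib, Finset.sum_add_distrib,
    Finset.sum_ite_eq', Finset.sum_ite_eq', if_pos (Finset.mem_univ i0),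
    if_pos (Finset.mem_univ i0), Finset.sum_const, ← Finset.mul_sum, sum_sq,
    Finset.card_univ, Fintype.card_fin, nsmul_eq_mul]
  have hk := key_identity (n := n) hr hL hn
  have expand : P1 n r * (r⁻¹ * x i0) + x i0 * Q n r + (n : ℝ) * (x i0 * Q n r)
      + x i0 * Q1 n r * r⁻¹ * r ^ 2
      = x i0 * (P1 n r / r + ((n:ℝ) + 1) * Q n r + r * Q1 n r) := by
    field_simp
    ring
  rw [← hrdef]
  rw [expand, hk, mul_zero]

end OdePde
end OdePde

open OdePde in
theorem ode_and_pde_solution (n : ℕ) (hn : 2 ≤ n) :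
    let a : ℝ → ℝ := fun r =>
      -(1 + (n : ℝ) * Real.log (64 / r)) /
        (((n : ℝ) - 1) * (Real.log (64 / r)) ^ 2 * Real.log (Real.log (64 / r)))
    let v : ℝ → ℝ := fun r => Real.log (Real.log (64 / r))
    let u : EuclideanSpace ℝ (Fin n) → ℝ := fun y => y ⟨0, by omega⟩ * v ‖y‖
    let A : Fin n → Fin n → EuclideanSpace ℝ (Fin n) → ℝ := fun α β y =>
      (if α = β then (1 : ℝ) else 0) +
        a ‖y‖ * ((if α = β then (1 : ℝ) else 0) - y α * y β / ‖y‖ ^ 2)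
    (∀ r : ℝ, 0 < r → r ≤ 4 →
      deriv (deriv v) r + ((n : ℝ) + 1) / r * deriv v r
        - ((n : ℝ) - 1) / r ^ 2 * a r * v r = 0) ∧
    (∀ x : EuclideanSpace ℝ (Fin n), x ≠ 0 → ‖x‖ < 4 →
      (∑ α : Fin n, fderiv ℝ
          (fun y => ∑ β : Fin n, A α β y * fderiv ℝ u y (EuclideanSpace.single β 1)) x
          (EuclideanSpace.single α 1)) = 0) := by
  intro a v u A
  have hn' : (n:ℝ) - 1 ≠ 0 := by
    have : (2:ℝ) ≤ (n:ℝ) := by exact_mod_cast hn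
    linarith
  constructor
  · intro r hr hr4
    have h16 : r < 16 := by linarith
    have hL1 := L_gt_one hr h16
    have hL : L r ≠ 0 := by linarith
    have hdv : ∀ s ∈ Set.Ioo (0:ℝ) 16, deriv v s = V1 s := by
      intro s hs
      have hev : v =ᶠ[nhds s] V := by
        filter_upwards [IsOpen.mem_nhds isOpen_Ioi hs.1] with t ht
        simp only [v]
        rw [log_64_div ht]
        rfl
      have hLs : L s ≠ 0 := by have := L_gt_one hs.1 hs.2; linarith
      rw [hev.deriv_eq, (hasDerivAt_V hs.1 hLs).deriv]
    have hdd : deriv (deriv v) r = V2 r := by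
      have hev2 : deriv v =ᶠ[nhds r] V1 := by
        filter_upwards [IsOpen.mem_nhds isOpen_Ioo (⟨hr, h16⟩ : r ∈ Set.Ioo (0:ℝ) 16)] with t ht
        exact hdv t ht
      rw [hev2.deriv_eq, (hasDerivAt_V1 hr hL).deriv]
    have hv1 : deriv v r = V1 r := hdv r ⟨hr, h16⟩
    have hlogL : Real.log (L r) ≠ 0 := (Real.log_pos hL1).ne'
    have hav : a r * v r = H n r := by
      simp only [a, v]
      rw [log_64_div hr]
      unfold H
      field_simp
    rw [hdd, hv1]
    calc V2 r + ((n:ℝ)+1)/r * V1 r - ((n:ℝ)-1)/r^2 * a r * v r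
        = V2 r + ((n:ℝ)+1)/r * V1 r - ((n:ℝ)-1)/r^2 * H n r := by rw [mul_assoc, hav]
      _ = 0 := ode_identity hr hL hn'
  · intro x hx hx4
    have i0def : (⟨0, by omega⟩ : Fin n) = ⟨0, by omega⟩ := rfl
    set i0 : Fin n := ⟨0, by omega⟩ with hi0
    have hr : (0:ℝ) < ‖x‖ := norm_pos_iff.mpr hx
    have h16 : ‖x‖ < 16 := by linarith
    have key : ∀ α : Fin n,
        fderiv ℝ (fun y => ∑ β : Fin n, A α β y * fderiv ℝ u y (EuclideanSpace.single β 1)) x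
          (EuclideanSpace.single α 1)
        = (if α = i0 then (1:ℝ) else 0) * (P1 n ‖x‖ * (‖x‖⁻¹ * x α))
          + ((if i0 = α then (1:ℝ) else 0) * x α + x i0) * Q n ‖x‖
          + x i0 * x α * (Q1 n ‖x‖ * (‖x‖⁻¹ * x α)) := by
      intro α
      have hopen : IsOpen {y : EuclideanSpace ℝ (Fin n) | y ≠ 0 ∧ ‖y‖ < 16} := by
        exact isOpen_compl_singleton.inter (isOpen_Iio.preimage continuous_norm)
      have hev : (fun y => ∑ β : Fin n, A α β y * fderiv ℝ u y (EuclideanSpace.single β 1))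
          =ᶠ[nhds x] (fun y : EuclideanSpace ℝ (Fin n) =>
            (if α = i0 then (1:ℝ) else 0) * P n ‖y‖ + y i0 * y α * Q n ‖y‖) := by
        filter_upwards [IsOpen.mem_nhds hopen ⟨hx, h16⟩] with z hz
        have := flux_eq hn' i0 α hz.1 hz.2
        simp only [A, u, v, a]
        rw [this]
      rw [hev.fderiv_eq]
      exact fderiv_Phi_apply hn' i0 α hx h16
    rw [Finset.sum_congr rfl fun α _ => key α]
    exact final_sum hn' i0 hx h16
end
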